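/- arXiv:1806.00618 — 5 statements merged into one kernel-verified Lean document; each statement's English description precedes it below -/
import Mathlib

section
/- Let x ∈ [0,1) be irrational with continued fraction expansion x = [a₁, a₂, ...], convergents pₙ/qₙ, complete quotient θ_{n+1} = [a_{n+1}, a_{n+2}, ...] and reversed quotient φₙ = [aₙ, a_{n−1}, ..., a₁]. Then (1 + θ_{n+1}·φₙ)^{−1} = qₙ·|q_{n−1}·x − p_{n−1}| for all n ≥ 1. -/
open Set MeasureTheory Filter

/-- The Gauss map `T(x) = 1/x - ⌊1/x⌋` (with `T 0 = 0`). -/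
noncomputable def gaussMap (x : ℝ) : ℝ := Int.fract x⁻¹

/-- The `n`-th partial quotient `aₙ(x)` (indexed from `n = 1`). -/
noncomputable def cfA (x : ℝ) (n : ℕ) : ℕ := ⌊(gaussMap^[n - 1] x)⁻¹⌋₊

/-- Numerators `pₙ` of the convergents of `[b 1, b 2, ...]`:
`p₀ = 0`, `p₁ = 1` (since `p₋₁ = 1`), `p_{n+2} = b (n+2) p_{n+1} + pₙ`. -/
def cfP (b : ℕ → ℕ) : ℕ → ℕ
  | 0 => 0
  | 1 => 1
  | n + 2 => b (n + 2) * cfP b (n + 1) + cfP b n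

/-- Denominators (continuants) `qₙ` of the convergents of `[b 1, b 2, ...]`:
`q₀ = 1`, `q₁ = b 1`, `q_{n+2} = b (n+2) q_{n+1} + qₙ`. -/
def cfQ (b : ℕ → ℕ) : ℕ → ℕ
  | 0 => 1
  | 1 => b 1
  | n + 2 => b (n + 2) * cfQ b (n + 1) + cfQ b n

/-- The cylinder `Iₙ(b 1, ..., b n)` of order `n`. -/
noncomputable def cfCyl (b : ℕ → ℕ) (n : ℕ) : Set ℝ :=
  {x ∈ Set.Ico (0 : ℝ) 1 | ∀ i, 1 ≤ i → i ≤ n → cfA x i = b i}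

lemma cfQ_front (b : ℕ → ℕ) (n : ℕ) :
    cfQ b (n+2) = b 1 * cfQ (fun i => b (i+1)) (n+1) + cfQ (fun i => b (i+2)) n := by
  induction n using Nat.strong_induction_on with
  | _ n ih =>
    match n with
    | 0 => simp [cfQ]; ring
    | 1 => simp [cfQ]; ring
    | (m+2) =>
      have h1 := ih (m+1) (by omega)
      have h2 := ih m (by omega)
      show b (m+4) * cfQ b (m+3) + cfQ b (m+2) = _
      rw [h1, h2]
      show _ = b 1 * ((fun i => b (i+1)) (m+3) * cfQ (fun i => b (i+1)) (m+2)
          + cfQ (fun i => b (i+1)) (m+1))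
          + ((fun i => b (i+2)) (m+2) * cfQ (fun i => b (i+2)) (m+1) + cfQ (fun i => b (i+2)) m)
      simp only []
      ring

lemma cfQ_rev (n : ℕ) : ∀ b : ℕ → ℕ, cfQ (fun i => b (n + 1 - i)) n = cfQ b n := by
  induction n using Nat.strong_induction_on with
  | _ n ih =>
    match n with
    | 0 => intro b; rfl
    | 1 => intro b; rfl
    | (m+2) =>
      intro b
      rw [cfQ_front]
      have e1 : (fun i => (fun j => b (m + 2 + 1 - j)) (i+1)) = fun i => b (m + 1 + 1 - i) := by
        funext i; show b (m + 2 + 1 - (i+1)) = b (m + 1 + 1 - i); congr 1; omega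
      have e2 : (fun i => (fun j => b (m + 2 + 1 - j)) (i+2)) = fun i => b (m + 1 - i) := by
        funext i; show b (m + 2 + 1 - (i+2)) = b (m + 1 - i); congr 1; omega
      rw [e1, e2, ih (m+1) (by omega) b, ih m (by omega) b]
      show b (m + 2 + 1 - 1) * cfQ b (m+1) + cfQ b m = b (m+2) * cfQ b (m+1) + cfQ b m
      norm_num

lemma cfP_shift (b : ℕ → ℕ) (n : ℕ) : cfP b (n+1) = cfQ (fun i => b (i+1)) n := by
  induction n using Nat.strong_induction_on with
  | _ n ih =>
    match n with
    | 0 => rfl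
    | 1 => show b 2 * 1 + 0 = b 2; ring
    | (m+2) =>
      show b (m+3) * cfP b (m+2) + cfP b (m+1) = _
      rw [ih (m+1) (by omega), ih m (by omega)]
      show _ = (fun i => b (i+1)) (m+2) * cfQ (fun i => b (i+1)) (m+1) + cfQ (fun i => b (i+1)) m
      simp only []

lemma cfQ_pos (b : ℕ → ℕ) (hb : 1 ≤ b 1) (n : ℕ) : 0 < cfQ b n := by
  induction n using Nat.strong_induction_on with
  | _ n ih =>
    match n with
    | 0 => exact Nat.one_pos
    | 1 => exact hb
    | (m+2) =>
      have := ih m (by omega)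
      show 0 < b (m+2) * cfQ b (m+1) + cfQ b m
      omega

lemma cfDet (b : ℕ → ℕ) (m : ℕ) :
    (cfP b (m+1) : ℤ) * cfQ b m - (cfP b m : ℤ) * cfQ b (m+1) = (-1)^m := by
  induction m with
  | zero => simp [cfP, cfQ]
  | succ k ih =>
    show (cfP b (k+2) : ℤ) * cfQ b (k+1) - (cfP b (k+1) : ℤ) * cfQ b (k+2) = _
    show ((b (k+2) * cfP b (k+1) + cfP b k : ℕ) : ℤ) * cfQ b (k+1)
      - (cfP b (k+1) : ℤ) * ((b (k+2) * cfQ b (k+1) + cfQ b k : ℕ) : ℤ) = _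
    push_cast
    rw [pow_succ]
    linear_combination (-1 : ℤ) * ih

lemma gauss_mem (x : ℝ) (hx : x ∈ Set.Ico (0 : ℝ) 1) (hirr : Irrational x) (k : ℕ) :
    gaussMap^[k] x ∈ Set.Ioo (0:ℝ) 1 ∧ Irrational (gaussMap^[k] x) := by
  induction k with
  | zero =>
    exact ⟨⟨lt_of_le_of_ne hx.1 (Ne.symm hirr.ne_zero), hx.2⟩, hirr⟩
  | succ k ih =>
    obtain ⟨hmem, hi⟩ := ih
    rw [Function.iterate_succ_apply']
    have hinv : Irrational (gaussMap^[k] x)⁻¹ := hi.inv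
    have hfr : Irrational (gaussMap (gaussMap^[k] x)) := by
      show Irrational (Int.fract _)
      rw [Int.fract]
      exact Irrational.sub_intCast hinv _
    refine ⟨⟨lt_of_le_of_ne (Int.fract_nonneg _) (Ne.symm hfr.ne_zero), Int.fract_lt_one _⟩, hfr⟩

lemma gauss_step (x : ℝ) (hx : x ∈ Set.Ico (0 : ℝ) 1) (hirr : Irrational x) (k : ℕ) :
    gaussMap^[k+1] x = (gaussMap^[k] x)⁻¹ - (cfA x (k+1) : ℝ) := by
  have hmem := (gauss_mem x hx hirr k).1
  rw [Function.iterate_succ_apply']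
  show Int.fract _ = _
  rw [Int.fract]
  congr 1
  have : cfA x (k+1) = ⌊(gaussMap^[k] x)⁻¹⌋₊ := by simp [cfA]
  rw [this]
  have h0 : (0:ℝ) ≤ (gaussMap^[k] x)⁻¹ := inv_nonneg.mpr hmem.1.le
  exact_mod_cast (Int.natCast_floor_eq_floor h0).symm

lemma cfA_pos (x : ℝ) (hx : x ∈ Set.Ico (0 : ℝ) 1) (hirr : Irrational x) (k : ℕ) :
    1 ≤ cfA x (k+1) := by
  have hmem := (gauss_mem x hx hirr k).1
  have : (1:ℝ) ≤ (gaussMap^[k] x)⁻¹ := by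
    rw [le_inv_comm₀ one_pos hmem.1]; simpa using hmem.2.le
  have : cfA x (k+1) = ⌊(gaussMap^[k] x)⁻¹⌋₊ := by simp [cfA]
  rw [this]
  exact Nat.le_floor (by simpa using ‹(1:ℝ) ≤ _›)

lemma cassels_key (x : ℝ) (hx : x ∈ Set.Ico (0 : ℝ) 1) (hirr : Irrational x) (m : ℕ) :
    x * ((cfQ (cfA x) (m+1) : ℝ) + gaussMap^[m+1] x * (cfQ (cfA x) m : ℝ)) =
      (cfP (cfA x) (m+1) : ℝ) + gaussMap^[m+1] x * (cfP (cfA x) m : ℝ) := by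
  induction m with
  | zero =>
    have h := gauss_step x hx hirr 0
    simp only [Function.iterate_zero, id_eq] at h
    have hx0 : x ≠ 0 := hirr.ne_zero
    have e1 : cfQ (cfA x) (0+1) = cfA x 1 := rfl
    have e2 : cfQ (cfA x) 0 = 1 := rfl
    have e3 : cfP (cfA x) (0+1) = 1 := rfl
    have e4 : cfP (cfA x) 0 = 0 := rfl
    rw [e1, e2, e3, e4]
    show x * ((cfA x 1 : ℝ) + gaussMap^[0+1] x * (1:ℕ)) = (1:ℕ) + gaussMap^[0+1] x * (0:ℕ)
    rw [h]
    push_cast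
    field_simp
    ring
  | succ k ih =>
    have hstep := gauss_step x hx hirr (k+1)
    have ht := (gauss_mem x hx hirr (k+1)).2.ne_zero
    set t := gaussMap^[k+1] x with hT
    have hq : (cfQ (cfA x) (k+2) : ℝ)
        = (cfA x (k+2) : ℝ) * cfQ (cfA x) (k+1) + cfQ (cfA x) k := by
      show ((cfA x (k+2) * cfQ (cfA x) (k+1) + cfQ (cfA x) k : ℕ) : ℝ) = _
      push_cast; ring
    have hp : (cfP (cfA x) (k+2) : ℝ)
        = (cfA x (k+2) : ℝ) * cfP (cfA x) (k+1) + cfP (cfA x) k := by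
      show ((cfA x (k+2) * cfP (cfA x) (k+1) + cfP (cfA x) k : ℕ) : ℝ) = _
      push_cast; ring
    rw [hstep, hq, hp]
    have hinv : t⁻¹ * t = 1 := inv_mul_cancel₀ ht
    refine mul_right_cancel₀ ht ?_
    linear_combination ih + (x * (cfQ (cfA x) (k+1) : ℝ) - (cfP (cfA x) (k+1) : ℝ)) * hinv

/-- Cassels identity: `(1 + θ_{n+1} φₙ)⁻¹ = qₙ |q_{n-1} x - p_{n-1}|`. -/
theorem cassels_identity (x : ℝ) (hx : x ∈ Set.Ico (0 : ℝ) 1) (hirr : Irrational x)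
    (n : ℕ) (hn : 1 ≤ n) :
    (1 + gaussMap^[n] x *
        ((cfP (fun i => cfA x (n + 1 - i)) n : ℝ) / (cfQ (fun i => cfA x (n + 1 - i)) n)))⁻¹ =
      (cfQ (cfA x) n : ℝ) * |(cfQ (cfA x) (n - 1) : ℝ) * x - (cfP (cfA x) (n - 1) : ℝ)| := by
  obtain ⟨m, rfl⟩ : ∃ m, n = m + 1 := ⟨n - 1, by omega⟩
  simp only [Nat.add_sub_cancel]
  -- rewrite the reversed continuants
  have hrevQ : cfQ (fun i => cfA x (m + 1 + 1 - i)) (m+1) = cfQ (cfA x) (m+1) :=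
    cfQ_rev (m+1) (cfA x)
  have hrevP : cfP (fun i => cfA x (m + 1 + 1 - i)) (m+1) = cfQ (cfA x) m := by
    rw [cfP_shift]
    have e : (fun i => (fun j => cfA x (m + 1 + 1 - j)) (i+1)) = fun i => cfA x (m + 1 - i) := by
      funext i; show cfA x (m + 1 + 1 - (i+1)) = cfA x (m + 1 - i); congr 1; omega
    rw [e, cfQ_rev m (cfA x)]
  rw [hrevQ, hrevP]
  set t := gaussMap^[m+1] x with hT
  set Q1 := (cfQ (cfA x) (m+1) : ℝ) with hQ1
  set Q0 := (cfQ (cfA x) m : ℝ) with hQ0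
  set P1 := (cfP (cfA x) (m+1) : ℝ) with hP1
  set P0 := (cfP (cfA x) m : ℝ) with hP0
  have hkey : x * (Q1 + t * Q0) = P1 + t * P0 := cassels_key x hx hirr m
  have hdet : P1 * Q0 - P0 * Q1 = (-1:ℝ)^m := by
    have h := cfDet (cfA x) m
    have h2 := congrArg (fun z : ℤ => (z : ℝ)) h
    push_cast at h2
    exact h2
  have ht : t ∈ Set.Ioo (0:ℝ) 1 := (gauss_mem x hx hirr (m+1)).1
  have hb1 : 1 ≤ cfA x 1 := cfA_pos x hx hirr 0
  have hQ1pos : (0:ℝ) < Q1 := by rw [hQ1]; exact_mod_cast cfQ_pos (cfA x) hb1 (m+1)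
  have hQ0pos : (0:ℝ) < Q0 := by rw [hQ0]; exact_mod_cast cfQ_pos (cfA x) hb1 m
  have hD : (0:ℝ) < Q1 + t * Q0 := by nlinarith [ht.1]
  have habs : Q0 * x - P0 = (-1:ℝ)^m / (Q1 + t * Q0) := by
    rw [eq_div_iff hD.ne']
    linear_combination Q0 * hkey + hdet
  rw [habs, abs_div, abs_pow, abs_neg, abs_one, one_pow, abs_of_pos hD]
  have hsum : 1 + t * (Q0 / Q1) = (Q1 + t * Q0) / Q1 := by field_simp
  rw [hsum, inv_div, mul_one_div]
end

section
/- Let Ψ : [1,∞) → ℝ₊ be non-decreasing. If x ∈ [0,1) is irrational and |x − p/q| < 1/(q²·3Ψ(q)) for infinitely many pairs (p,q) ∈ ℤ × ℕ, then a_{n+1}(x) > Ψ(qₙ(x)) for infinitely many n, and hence aₙ(x)·a_{n+1}(x) > Ψ(qₙ(x)) for infinitely many n. -/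
open Set MeasureTheory Filter

namespace CFAux

lemma gauss_step {y : ℝ} (hy : y ∈ Set.Ioo (0:ℝ) 1) (hirr : Irrational y) :
    Irrational (gaussMap y) ∧ gaussMap y ∈ Set.Ioo (0:ℝ) 1 ∧
    y⁻¹ = (⌊y⁻¹⌋₊ : ℝ) + gaussMap y ∧ 1 ≤ ⌊y⁻¹⌋₊ := by
  obtain ⟨hy0, hy1⟩ := hy
  have hinv : Irrational y⁻¹ := hirr.inv
  have h1 : 1 < y⁻¹ := (one_lt_inv₀ hy0).2 hy1
  have hfl : (⌊y⁻¹⌋₊ : ℝ) = (⌊y⁻¹⌋ : ℤ) := natCast_floor_eq_intCast_floor (by linarith)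
  have hg : gaussMap y = y⁻¹ - (⌊y⁻¹⌋ : ℤ) := by
    rw [gaussMap, Int.self_sub_floor]
  have hirr' : Irrational (gaussMap y) := by rw [hg]; exact hinv.sub_intCast _
  refine ⟨hirr', ⟨?_, ?_⟩, by rw [hg, hfl]; ring, ?_⟩
  · rcases lt_or_eq_of_le (Int.fract_nonneg y⁻¹ : (0:ℝ) ≤ gaussMap y) with h | h
    · exact h
    · exact absurd h.symm (by intro h0; exact hirr'.ne_int 0 (by simpa [gaussMap] using h0))
  · exact Int.fract_lt_one y⁻¹
  · exact Nat.le_floor (by exact_mod_cast h1.le)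

variable {x : ℝ}

lemma iter_mem (hx : x ∈ Set.Ioo (0:ℝ) 1) (hirr : Irrational x) (n : ℕ) :
    Irrational (gaussMap^[n] x) ∧ gaussMap^[n] x ∈ Set.Ioo (0:ℝ) 1 := by
  induction n with
  | zero => exact ⟨hirr, hx⟩
  | succ n ih =>
      rw [Function.iterate_succ_apply']
      exact ⟨(gauss_step ih.2 ih.1).1, (gauss_step ih.2 ih.1).2.1⟩

/-- key recursion: `(T^n x)⁻¹ = a_{n+1} + T^{n+1} x`, and `a_{n+1} ≥ 1`. -/
lemma key (hx : x ∈ Set.Ioo (0:ℝ) 1) (hirr : Irrational x) (n : ℕ) :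
    (gaussMap^[n] x)⁻¹ = (cfA x (n+1) : ℝ) + gaussMap^[n+1] x ∧ 1 ≤ cfA x (n+1) := by
  obtain ⟨h1, h2⟩ := iter_mem hx hirr n
  have hA : cfA x (n+1) = ⌊(gaussMap^[n] x)⁻¹⌋₊ := by simp [cfA]
  have := gauss_step h2 h1
  rw [Function.iterate_succ_apply', hA]
  exact ⟨this.2.2.1, this.2.2.2⟩

end CFAux

namespace CFAux
/-! pure continuant lemmas -/
variable {b : ℕ → ℕ} (hb : ∀ n, 1 ≤ b (n+1))
include hb

lemma cfQ_pos : ∀ n, 1 ≤ cfQ b n := by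
  have H : ∀ n, 1 ≤ cfQ b n ∧ 1 ≤ cfQ b (n+1) := by
    intro n
    induction n with
    | zero => exact ⟨le_refl _, hb 0⟩
    | succ n ih =>
        refine ⟨ih.2, ?_⟩
        show 1 ≤ b (n+2) * cfQ b (n+1) + cfQ b n
        have := hb (n+1)
        nlinarith [ih.1, ih.2]
  exact fun n => (H n).1

lemma cfQ_le_succ : ∀ n, cfQ b n ≤ cfQ b (n+1) := by
  intro n
  cases n with
  | zero => exact hb 0
  | succ n =>
      show cfQ b (n+1) ≤ b (n+2) * cfQ b (n+1) + cfQ b n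
      nlinarith [hb (n+1), cfQ_pos hb n, cfQ_pos hb (n+1)]

lemma cfQ_mono : Monotone (cfQ b) := monotone_nat_of_le_succ (cfQ_le_succ hb)

lemma cfQ_ge : ∀ n, n ≤ cfQ b n := by
  have H : ∀ n, n ≤ cfQ b n ∧ n+1 ≤ cfQ b (n+1) := by
    intro n
    induction n with
    | zero => exact ⟨Nat.zero_le _, hb 0⟩
    | succ n ih =>
        refine ⟨ih.2, ?_⟩
        show n+2 ≤ b (n+2) * cfQ b (n+1) + cfQ b n
        nlinarith [hb (n+1), cfQ_pos hb n, ih.2]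
  exact fun n => (H n).1

end CFAux


namespace CFAux
lemma cfDet (b : ℕ → ℕ) : ∀ n, (cfP b (n+1) : ℤ) * cfQ b n - (cfP b n : ℤ) * cfQ b (n+1) = (-1)^n := by
  intro n
  induction n with
  | zero => simp [cfP, cfQ]
  | succ n ih =>
      have hP : (cfP b (n+2) : ℤ) = b (n+2) * cfP b (n+1) + cfP b n := by
        show ((b (n + 2) * cfP b (n + 1) + cfP b n : ℕ) : ℤ) = _; push_cast; ring
      have hQ : (cfQ b (n+2) : ℤ) = b (n+2) * cfQ b (n+1) + cfQ b n := by
        show ((b (n + 2) * cfQ b (n + 1) + cfQ b n : ℕ) : ℤ) = _; push_cast; ring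
      rw [hP, hQ]
      ring_nf
      ring_nf at ih
      linarith [ih]
end CFAux

namespace CFAux
variable {x : ℝ}

noncomputable def Ee (x : ℝ) (n : ℕ) : ℝ := x * (cfQ (cfA x) n : ℝ) - (cfP (cfA x) n : ℝ)

lemma keyC (hx : x ∈ Set.Ioo (0:ℝ) 1) (hirr : Irrational x) : ∀ n : ℕ,
    x * ((cfQ (cfA x) (n+1) : ℝ) + (cfQ (cfA x) n : ℝ) * gaussMap^[n+1] x)
      = (cfP (cfA x) (n+1) : ℝ) + (cfP (cfA x) n : ℝ) * gaussMap^[n+1] x := by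
  intro n
  induction n with
  | zero =>
      have hk := (key hx hirr 0).1
      simp only [Function.iterate_zero_apply] at hk
      have hx0 : x ≠ 0 := ne_of_gt hx.1
      have h1 : x * ((cfA x 1 : ℝ) + gaussMap^[0+1] x) = 1 := by
        rw [← hk]; field_simp
      show x * ((cfQ (cfA x) 1 : ℝ) + (cfQ (cfA x) 0 : ℝ) * gaussMap^[0+1] x)
        = (cfP (cfA x) 1 : ℝ) + (cfP (cfA x) 0 : ℝ) * gaussMap^[0+1] x
      have e1 : cfQ (cfA x) 1 = cfA x 1 := rfl
      have e2 : cfQ (cfA x) 0 = 1 := rfl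
      have e3 : cfP (cfA x) 1 = 1 := rfl
      have e4 : cfP (cfA x) 0 = 0 := rfl
      rw [e1, e2, e3, e4]
      push_cast
      linear_combination h1
  | succ n ih =>
      obtain ⟨h1, h2⟩ := iter_mem hx hirr (n+1)
      have hk := (key hx hirr (n+1)).1
      have hs0 : gaussMap^[n+1] x ≠ 0 := ne_of_gt h2.1
      have hXs : (gaussMap^[n+1] x) * ((cfA x (n+2) : ℝ) + gaussMap^[n+1+1] x) = 1 := by
        rw [← hk]; exact mul_inv_cancel₀ hs0
      have hP : (cfP (cfA x) (n+2) : ℝ)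
          = (cfA x (n+2) : ℝ) * cfP (cfA x) (n+1) + cfP (cfA x) n := by
        show ((cfA x (n + 2) * cfP (cfA x) (n + 1) + cfP (cfA x) n : ℕ) : ℝ) = _
        push_cast; ring
      have hQ : (cfQ (cfA x) (n+2) : ℝ)
          = (cfA x (n+2) : ℝ) * cfQ (cfA x) (n+1) + cfQ (cfA x) n := by
        show ((cfA x (n + 2) * cfQ (cfA x) (n + 1) + cfQ (cfA x) n : ℕ) : ℝ) = _
        push_cast; ring
      rw [hP, hQ]
      linear_combination ((cfA x (n+2) : ℝ) + gaussMap^[n+1+1] x) * ih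
        - (x * (cfQ (cfA x) n : ℝ) - (cfP (cfA x) n : ℝ)) * hXs

lemma Ee_rec (hx : x ∈ Set.Ioo (0:ℝ) 1) (hirr : Irrational x) (n : ℕ) :
    Ee x (n+1) = -(gaussMap^[n+1] x) * Ee x n := by
  unfold Ee
  linear_combination keyC hx hirr n

lemma Ee_ne (hx : x ∈ Set.Ioo (0:ℝ) 1) (hirr : Irrational x) : ∀ n, Ee x n ≠ 0 := by
  intro n
  induction n with
  | zero =>
      unfold Ee
      have e2 : cfQ (cfA x) 0 = 1 := rfl
      have e4 : cfP (cfA x) 0 = 0 := rfl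
      rw [e2, e4]
      push_cast
      simpa using ne_of_gt hx.1
  | succ n ih =>
      rw [Ee_rec hx hirr n]
      have := (iter_mem hx hirr (n+1)).2.1
      intro hcon
      rcases mul_eq_zero.1 hcon with h | h
      · exact absurd (neg_eq_zero.1 h) (ne_of_gt this)
      · exact ih h

lemma cfDetR (b : ℕ → ℕ) (n : ℕ) :
    (cfP b (n+1) : ℝ) * cfQ b n - (cfP b n : ℝ) * cfQ b (n+1) = (-1)^n := by
  exact_mod_cast congrArg (fun z : ℤ => (z : ℝ)) (cfDet b n)

lemma Ee_eq (hx : x ∈ Set.Ioo (0:ℝ) 1) (hirr : Irrational x) (n : ℕ) :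
    Ee x (n+1) * ((cfQ (cfA x) (n+1) : ℝ) + (cfQ (cfA x) n : ℝ) * gaussMap^[n+1] x)
      = (-1)^(n+1) * gaussMap^[n+1] x := by
  unfold Ee
  linear_combination (cfQ (cfA x) (n+1) : ℝ) * keyC hx hirr n
    - (gaussMap^[n+1] x) * cfDetR (cfA x) n

end CFAux

namespace CFAux
variable {x : ℝ}

lemma hA1 (hx : x ∈ Set.Ioo (0:ℝ) 1) (hirr : Irrational x) : ∀ n, 1 ≤ cfA x (n+1) :=
  fun n => (key hx hirr n).2

lemma Ee_abs (hx : x ∈ Set.Ioo (0:ℝ) 1) (hirr : Irrational x) (n : ℕ) :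
    |Ee x (n+1)| * ((cfQ (cfA x) (n+1) : ℝ) + (cfQ (cfA x) n : ℝ) * gaussMap^[n+1] x)
      = gaussMap^[n+1] x := by
  have hX := (iter_mem hx hirr (n+1)).2
  have hQ1 : (1:ℝ) ≤ (cfQ (cfA x) (n+1) : ℝ) := by
    exact_mod_cast cfQ_pos (hA1 hx hirr) (n+1)
  have hQ0 : (0:ℝ) ≤ (cfQ (cfA x) n : ℝ) := by positivity
  have hD : (0:ℝ) < (cfQ (cfA x) (n+1) : ℝ) + (cfQ (cfA x) n : ℝ) * gaussMap^[n+1] x := by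
    nlinarith [hX.1]
  have h := congrArg abs (Ee_eq hx hirr n)
  rw [abs_mul, abs_of_pos hD, abs_mul, abs_pow, abs_neg, abs_one, one_pow, one_mul,
    abs_of_pos hX.1] at h
  exact h

lemma L1 (hx : x ∈ Set.Ioo (0:ℝ) 1) (hirr : Irrational x) (n : ℕ) :
    1 < |Ee x n| * ((cfQ (cfA x) (n+1) : ℝ) + (cfQ (cfA x) n : ℝ)) := by
  cases n with
  | zero =>
      have hk := (key hx hirr 0).1
      simp only [Function.iterate_zero_apply] at hk
      have hx0 : x ≠ 0 := ne_of_gt hx.1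
      have hX1 := (iter_mem hx hirr 1).2
      have h1 : x * ((cfA x 1 : ℝ) + gaussMap^[1] x) = 1 := by
        rw [← hk]; exact mul_inv_cancel₀ hx0
      have e0 : Ee x 0 = x := by
        unfold Ee
        have e2 : cfQ (cfA x) 0 = 1 := rfl
        have e4 : cfP (cfA x) 0 = 0 := rfl
        rw [e2, e4]; push_cast; ring
      have e1 : cfQ (cfA x) 1 = cfA x 1 := rfl
      have e2 : cfQ (cfA x) 0 = 1 := rfl
      rw [e0, abs_of_pos hx.1, e1, e2]
      push_cast
      nlinarith [hX1.2, hx.1]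
  | succ n =>
      have habs := Ee_abs hx hirr n
      have hX := (iter_mem hx hirr (n+1)).2
      have hX2 := (iter_mem hx hirr (n+2)).2
      have hk := (key hx hirr (n+1)).1
      have hs0 : gaussMap^[n+1] x ≠ 0 := ne_of_gt hX.1
      have hs1 : 1 < (gaussMap^[n+1] x) * ((cfA x (n+2) : ℝ) + 1) := by
        have hinv : (gaussMap^[n+1] x) * (gaussMap^[n+1] x)⁻¹ = 1 := mul_inv_cancel₀ hs0
        rw [hk] at hinv
        nlinarith [hX.1, hX2.2]
      have hQ2 : (cfQ (cfA x) (n+2) : ℝ)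
          = (cfA x (n+2) : ℝ) * cfQ (cfA x) (n+1) + cfQ (cfA x) n := by
        show ((cfA x (n + 2) * cfQ (cfA x) (n + 1) + cfQ (cfA x) n : ℕ) : ℝ) = _
        push_cast; ring
      have hQ1 : (1:ℝ) ≤ (cfQ (cfA x) (n+1) : ℝ) := by
        exact_mod_cast cfQ_pos (hA1 hx hirr) (n+1)
      have hQ0 : (1:ℝ) ≤ (cfQ (cfA x) n : ℝ) := by
        exact_mod_cast cfQ_pos (hA1 hx hirr) n
      have hD : (0:ℝ) < (cfQ (cfA x) (n+1) : ℝ) + (cfQ (cfA x) n : ℝ) * gaussMap^[n+1] x := by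
        nlinarith [hX.1]
      have hEpos : 0 < |Ee x (n+1)| := abs_pos.2 (Ee_ne hx hirr (n+1))
      rw [hQ2]
      rw [← mul_lt_mul_iff_left₀ hD]
      have expand : |Ee x (n+1)| * ((cfA x (n+2) : ℝ) * (cfQ (cfA x) (n+1) : ℝ)
            + (cfQ (cfA x) n : ℝ) + (cfQ (cfA x) (n+1) : ℝ))
          * ((cfQ (cfA x) (n+1) : ℝ) + (cfQ (cfA x) n : ℝ) * gaussMap^[n+1] x)
          = (gaussMap^[n+1] x) * ((cfA x (n+2) : ℝ) * (cfQ (cfA x) (n+1) : ℝ)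
            + (cfQ (cfA x) n : ℝ) + (cfQ (cfA x) (n+1) : ℝ)) := by
        rw [mul_right_comm, habs]
      rw [one_mul, expand]
      nlinarith [hs1, hX.1, hQ1, hQ0]

lemma abs_le_abs_add {a b : ℝ} (h : 0 ≤ a * b) : |a| ≤ |a + b| := by
  have h2 : |a| * |a| ≤ |a + b| * |a + b| := by
    rw [abs_mul_abs_self, abs_mul_abs_self]; nlinarith
  nlinarith [abs_nonneg (a+b), abs_nonneg a, h2]

end CFAux

namespace CFAux
variable {x : ℝ}

lemma best_approx (hx : x ∈ Set.Ioo (0:ℝ) 1) (hirr : Irrational x) (n : ℕ)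
    (pf : ℤ) (qf : ℕ) (hq1 : 1 ≤ qf) (hq2 : qf < cfQ (cfA x) (n+1)) :
    pf * (cfQ (cfA x) n : ℤ) = (cfP (cfA x) n : ℤ) * qf
      ∨ |Ee x n| ≤ |(qf : ℝ) * x - (pf : ℝ)| := by
  set P0 : ℤ := (cfP (cfA x) n : ℤ) with hP0
  set P1 : ℤ := (cfP (cfA x) (n+1) : ℤ) with hP1
  set Q0 : ℤ := (cfQ (cfA x) n : ℤ) with hQ0
  set Q1 : ℤ := (cfQ (cfA x) (n+1) : ℤ) with hQ1
  have hdet : P1 * Q0 - P0 * Q1 = (-1:ℤ)^n := cfDet (cfA x) n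
  have hε : ((-1:ℤ)^n) * ((-1:ℤ)^n) = 1 := by
    rw [← mul_pow]; norm_num
  set μ : ℤ := ((-1:ℤ)^n) * (P1 * qf - Q1 * pf) with hμ
  set ν : ℤ := ((-1:ℤ)^n) * (Q0 * pf - P0 * qf) with hν
  have hp : μ * P0 + ν * P1 = pf := by
    rw [hμ, hν]; linear_combination (((-1:ℤ)^n) * pf) * hdet + pf * hε
  have hq : μ * Q0 + ν * Q1 = (qf : ℤ) := by
    rw [hμ, hν]; linear_combination (((-1:ℤ)^n) * qf) * hdet + qf * hε
  have hQ0pos : (0:ℤ) < Q0 := by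
    rw [hQ0]; exact_mod_cast cfQ_pos (hA1 hx hirr) n
  have hQ1pos : (0:ℤ) < Q1 := by
    rw [hQ1]; exact_mod_cast cfQ_pos (hA1 hx hirr) (n+1)
  have hqfpos : (0:ℤ) < (qf:ℤ) := by exact_mod_cast hq1
  have hqflt : (qf:ℤ) < Q1 := by rw [hQ1]; exact_mod_cast hq2
  by_cases hν0 : ν = 0
  · left
    linear_combination (-(1:ℤ)) * (Q0 * hp - P0 * hq) + (P1 * Q0 - P0 * Q1) * hν0
  · right
    have hμ0 : μ ≠ 0 := by
      intro h0
      rw [h0] at hq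
      simp only [zero_mul, zero_add] at hq
      rcases lt_trichotomy ν 0 with hc | hc | hc
      · nlinarith
      · exact hν0 hc
      · have : 1 ≤ ν := hc
        nlinarith
    have hμν : μ * ν < 0 := by
      rcases lt_trichotomy ν 0 with hc | hc | hc
      · have hμpos : 0 < μ := by nlinarith
        exact mul_neg_of_pos_of_neg hμpos hc
      · exact absurd hc hν0
      · have hμneg : μ < 0 := by nlinarith
        exact mul_neg_of_neg_of_pos hμneg hc
    have hpR : (μ:ℝ) * (cfP (cfA x) n : ℝ) + (ν:ℝ) * (cfP (cfA x) (n+1) : ℝ) = (pf:ℝ) := by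
      exact_mod_cast congrArg (fun z : ℤ => (z:ℝ)) hp
    have hqR : (μ:ℝ) * (cfQ (cfA x) n : ℝ) + (ν:ℝ) * (cfQ (cfA x) (n+1) : ℝ) = (qf:ℝ) := by
      exact_mod_cast congrArg (fun z : ℤ => (z:ℝ)) hq
    have hsum : (qf : ℝ) * x - (pf : ℝ) = (μ:ℝ) * Ee x n + (ν:ℝ) * Ee x (n+1) := by
      unfold Ee; linear_combination hpR - x * hqR
    have hprod : 0 ≤ ((μ:ℝ) * Ee x n) * ((ν:ℝ) * Ee x (n+1)) := by
      rw [Ee_rec hx hirr n]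
      have hXpos := (iter_mem hx hirr (n+1)).2.1
      have he2 : 0 < (Ee x n)^2 := pow_two_pos_of_ne_zero (Ee_ne hx hirr n)
      have hμνR : (μ:ℝ) * (ν:ℝ) < 0 := by exact_mod_cast hμν
      nlinarith [mul_pos (mul_pos (neg_pos.2 hμνR) hXpos) he2]
    have h1 : |(μ:ℝ) * Ee x n| ≤ |(μ:ℝ) * Ee x n + (ν:ℝ) * Ee x (n+1)| :=
      abs_le_abs_add hprod
    have h2 : |Ee x n| ≤ |(μ:ℝ) * Ee x n| := by
      rw [abs_mul]
      have : (1:ℝ) ≤ |(μ:ℝ)| := by exact_mod_cast Int.one_le_abs hμ0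
      nlinarith [abs_nonneg (Ee x n)]
    rw [hsum]
    exact h2.trans h1

end CFAux

namespace CFAux
variable {x : ℝ}

lemma legendre (hx : x ∈ Set.Ioo (0:ℝ) 1) (hirr : Irrational x) (pf : ℤ) (qf : ℕ)
    (hq1 : 1 ≤ qf) (happ : |x - (pf:ℝ)/(qf:ℝ)| < 1/(2*(qf:ℝ)^2)) :
    ∃ n, pf * (cfQ (cfA x) n : ℤ) = (cfP (cfA x) n : ℤ) * qf
      ∧ cfQ (cfA x) n ≤ qf ∧ qf < cfQ (cfA x) (n+1) := by
  classical
  have hbig : ∃ k, qf < cfQ (cfA x) k :=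
    ⟨qf+1, lt_of_lt_of_le (Nat.lt_succ_self qf) (cfQ_ge (hA1 hx hirr) (qf+1))⟩
  have hm := Nat.find_spec hbig
  have hm0 : Nat.find hbig ≠ 0 := by
    intro h0
    rw [h0] at hm
    have h1 : cfQ (cfA x) 0 = 1 := rfl
    omega
  obtain ⟨n, hn⟩ : ∃ n, Nat.find hbig = n+1 :=
    ⟨Nat.find hbig - 1, (Nat.succ_pred_eq_of_ne_zero hm0).symm⟩
  have hle : cfQ (cfA x) n ≤ qf := by
    have := Nat.find_min hbig (by omega : n < Nat.find hbig)
    omega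
  have hlt : qf < cfQ (cfA x) (n+1) := by rw [← hn]; exact hm
  refine ⟨n, ?_, hle, hlt⟩
  by_cases heq : pf * (cfQ (cfA x) n : ℤ) = (cfP (cfA x) n : ℤ) * qf
  · exact heq
  · exfalso
    rcases best_approx hx hirr n pf qf hq1 hlt with he | hge
    · exact heq he
    set d := |x - (pf:ℝ)/(qf:ℝ)| with hd
    have hqfR : (0:ℝ) < (qf:ℝ) := by exact_mod_cast hq1
    have hqf_ne : (qf:ℝ) ≠ 0 := ne_of_gt hqfR
    have hmul : (qf:ℝ) * x - pf = (qf:ℝ) * (x - (pf:ℝ)/(qf:ℝ)) := by field_simp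
    have habs : |(qf:ℝ) * x - (pf:ℝ)| = (qf:ℝ) * d := by
      rw [hmul, abs_mul, abs_of_pos hqfR]
    have h1int : (1:ℤ) ≤ |pf * (cfQ (cfA x) n : ℤ) - (cfP (cfA x) n : ℤ) * qf| :=
      Int.one_le_abs (sub_ne_zero.2 heq)
    have h1R : (1:ℝ) ≤ |(pf:ℝ) * (cfQ (cfA x) n : ℝ) - (cfP (cfA x) n : ℝ) * (qf:ℝ)| := by
      exact_mod_cast h1int
    have hident : (pf:ℝ) * (cfQ (cfA x) n : ℝ) - (cfP (cfA x) n : ℝ) * (qf:ℝ)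
        = (qf:ℝ) * Ee x n + (-(cfQ (cfA x) n : ℝ)) * ((qf:ℝ) * x - (pf:ℝ)) := by
      unfold Ee; ring
    have htri : (1:ℝ) ≤ (qf:ℝ) * |Ee x n| + (cfQ (cfA x) n : ℝ) * |(qf:ℝ) * x - (pf:ℝ)| := by
      calc (1:ℝ) ≤ |(pf:ℝ) * (cfQ (cfA x) n : ℝ) - (cfP (cfA x) n : ℝ) * (qf:ℝ)| := h1R
      _ = |(qf:ℝ) * Ee x n + (-(cfQ (cfA x) n : ℝ)) * ((qf:ℝ) * x - (pf:ℝ))| := by rw [hident]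
      _ ≤ |(qf:ℝ) * Ee x n| + |(-(cfQ (cfA x) n : ℝ)) * ((qf:ℝ) * x - (pf:ℝ))| := abs_add_le _ _
      _ = (qf:ℝ) * |Ee x n| + (cfQ (cfA x) n : ℝ) * |(qf:ℝ) * x - (pf:ℝ)| := by
          rw [abs_mul, abs_mul, abs_neg, abs_of_pos hqfR, abs_of_nonneg
            (by positivity : (0:ℝ) ≤ (cfQ (cfA x) n : ℝ))]
    have hQ0le : (cfQ (cfA x) n : ℝ) ≤ (qf:ℝ) := by exact_mod_cast hle
    have h2 : d * (2*(qf:ℝ)^2) < 1 := by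
      rw [hd]
      rw [lt_div_iff₀ (by positivity : (0:ℝ) < 2*(qf:ℝ)^2)] at happ
      exact happ
    have hd0 : 0 ≤ d := abs_nonneg _
    rw [habs] at htri
    have hEd : |Ee x n| ≤ (qf:ℝ) * d := by rw [← habs]; exact hge
    nlinarith [htri, hEd, h2, hd0, hQ0le, hqfR]

lemma exists_large (Ψ : ℝ → ℝ) (hpos : ∀ t, 1 ≤ t → 0 < Ψ t)
    (hmono : ∀ s t : ℝ, 1 ≤ s → s ≤ t → Ψ s ≤ Ψ t)
    (hx01 : |x| ≤ 1)
    (h : {pq : ℤ × ℕ | 0 < pq.2 ∧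
      |x - (pq.1 : ℝ) / pq.2| < 1 / ((pq.2 : ℝ) ^ 2 * (3 * Ψ pq.2))}.Infinite)
    (B : ℕ) :
    ∃ pq : ℤ × ℕ, (0 < pq.2 ∧
      |x - (pq.1 : ℝ) / pq.2| < 1 / ((pq.2 : ℝ) ^ 2 * (3 * Ψ pq.2))) ∧ B < pq.2 := by
  by_contra hcon
  push_neg at hcon
  apply h
  set C : ℝ := 1 / (3 * Ψ 1) with hC
  have hΨ1 : 0 < Ψ 1 := hpos 1 le_rfl
  have hCpos : 0 < C := by rw [hC]; positivity
  set M : ℤ := ⌈(B:ℝ) * (1 + C)⌉ with hM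
  apply Set.Finite.subset ((Set.finite_Icc (-M) M).prod (Set.finite_Iic B))
  rintro ⟨p, q⟩ ⟨hq0, happ⟩
  have hqB : q ≤ B := hcon (p, q) ⟨hq0, happ⟩
  have hq1R : (1:ℝ) ≤ (q:ℝ) := by exact_mod_cast hq0
  have hΨq : Ψ 1 ≤ Ψ (q:ℝ) := hmono 1 q le_rfl hq1R
  have hbound : 1 / ((q : ℝ) ^ 2 * (3 * Ψ (q:ℝ))) ≤ C := by
    rw [hC]
    apply one_div_le_one_div_of_le (by positivity)
    nlinarith [mul_nonneg (by nlinarith [hq1R] : (0:ℝ) ≤ (q:ℝ)^2 - 1) (hpos (q:ℝ) hq1R).le, hΨq]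
  have happ2 : |x - (p : ℝ) / q| < C := lt_of_lt_of_le happ hbound
  have hpq : |(p:ℝ)/(q:ℝ)| ≤ 1 + C := by
    have : (p:ℝ)/(q:ℝ) = x - (x - (p:ℝ)/(q:ℝ)) := by ring
    rw [this]
    calc |x - (x - (p:ℝ)/(q:ℝ))| ≤ |x| + |x - (p:ℝ)/(q:ℝ)| := abs_sub _ _
    _ ≤ 1 + C := add_le_add hx01 happ2.le
  have hpR : |(p:ℝ)| ≤ (B:ℝ) * (1 + C) := by
    have hqpos : (0:ℝ) < (q:ℝ) := by linarith
    rw [abs_div] at hpq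
    rw [abs_of_pos hqpos] at hpq
    have h1 : |(p:ℝ)| ≤ (q:ℝ) * (1 + C) := by
      rw [div_le_iff₀ hqpos] at hpq; linarith [hpq]
    have h2 : (q:ℝ) * (1+C) ≤ (B:ℝ) * (1+C) := by
      have : (q:ℝ) ≤ (B:ℝ) := by exact_mod_cast hqB
      nlinarith
    linarith
  have hpM : |p| ≤ M := by
    have h3 : ((|p| : ℤ) : ℝ) ≤ (M : ℝ) := by
      rw [Int.cast_abs]
      exact hpR.trans (Int.le_ceil _)
    exact_mod_cast h3
  constructor
  · simp only [Set.mem_Icc]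
    constructor
    · linarith [neg_abs_le p, hpM]
    · linarith [le_abs_self p, hpM]
  · exact hqB

end CFAux

set_option maxHeartbeats 2000000 in
open CFAux in
theorem K_three_Psi_subset_G (Ψ : ℝ → ℝ) (hpos : ∀ t, 1 ≤ t → 0 < Ψ t)
    (hmono : ∀ s t : ℝ, 1 ≤ s → s ≤ t → Ψ s ≤ Ψ t)
    (x : ℝ) (hx : x ∈ Set.Ico (0 : ℝ) 1) (hirr : Irrational x)
    (h : {pq : ℤ × ℕ | 0 < pq.2 ∧
      |x - (pq.1 : ℝ) / pq.2| < 1 / ((pq.2 : ℝ) ^ 2 * (3 * Ψ pq.2))}.Infinite) :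
    {n : ℕ | 1 ≤ n ∧ Ψ ((cfQ (cfA x) n : ℝ)) < (cfA x (n + 1) : ℝ)}.Infinite ∧
    {n : ℕ | 1 ≤ n ∧
      Ψ ((cfQ (cfA x) n : ℝ)) < (cfA x n : ℝ) * (cfA x (n + 1) : ℝ)}.Infinite := by
  have hx0 : x ∈ Set.Ioo (0:ℝ) 1 := by
    refine ⟨lt_of_le_of_ne hx.1 ?_, hx.2⟩
    intro h0
    exact hirr.ne_int 0 (by simpa using h0.symm)
  have hb := hA1 hx0 hirr
  have hQ1 : ∀ n, (1:ℝ) ≤ (cfQ (cfA x) n : ℝ) := fun n => by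
    exact_mod_cast cfQ_pos hb n
  have hA1R : ∀ n, (1:ℝ) ≤ (cfA x (n+1) : ℝ) := fun n => by exact_mod_cast hb n
  have main : ∀ m : ℕ, ∃ n, m < n ∧ 1 ≤ n ∧ Ψ ((cfQ (cfA x) n : ℝ)) < (cfA x (n+1) : ℝ) := by
    intro m
    by_cases hcase : ∃ t : ℝ, 1 ≤ t ∧ 2/3 < Ψ t
    · obtain ⟨t0, ht0, hΨt0⟩ := hcase
      obtain ⟨⟨pf, qf⟩, ⟨hq0, happ⟩, hB⟩ := exists_large Ψ hpos hmono
        (by rw [abs_of_nonneg hx.1]; exact hx.2.le) h (max (cfQ (cfA x) (m+1)) ⌈t0⌉₊)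
      simp only at happ hq0 hB
      have hq1 : 1 ≤ qf := hq0
      have hqfR1 : (1:ℝ) ≤ (qf:ℝ) := by exact_mod_cast hq1
      have htq : t0 ≤ (qf:ℝ) := by
        have h1 : ⌈t0⌉₊ ≤ qf := le_of_lt (lt_of_le_of_lt (le_max_right _ _) hB)
        have h2 : t0 ≤ (⌈t0⌉₊ : ℝ) := Nat.le_ceil t0
        have h3 : ((⌈t0⌉₊ : ℕ) : ℝ) ≤ (qf : ℝ) := by exact_mod_cast h1
        linarith
      have hΨqf : 2/3 < Ψ (qf:ℝ) := lt_of_lt_of_le hΨt0 (hmono t0 qf ht0 htq)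
      have h2q : |x - (pf:ℝ)/(qf:ℝ)| < 1/(2*(qf:ℝ)^2) := by
        refine lt_of_lt_of_le happ ?_
        apply one_div_le_one_div_of_le (by positivity)
        nlinarith [sq_nonneg ((qf:ℝ))]
      obtain ⟨n, heq, hle, hlt⟩ := legendre hx0 hirr pf qf hq1 h2q
      have hmn : m < n := by
        by_contra hc
        push_neg at hc
        have h4 : cfQ (cfA x) (n+1) ≤ cfQ (cfA x) (m+1) := cfQ_mono hb (by omega)
        have h5 : cfQ (cfA x) (m+1) ≤ max (cfQ (cfA x) (m+1)) ⌈t0⌉₊ := le_max_left _ _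
        omega
      obtain ⟨k, rfl⟩ : ∃ k, n = k+1 := ⟨n-1, by omega⟩
      refine ⟨k+1, hmn, by omega, ?_⟩
      -- notation
      set Q0 : ℝ := (cfQ (cfA x) (k+1) : ℝ) with hQ0def
      set Q2 : ℝ := (cfQ (cfA x) (k+2) : ℝ) with hQ2def
      set A : ℝ := (cfA x (k+2) : ℝ) with hAdef
      set d : ℝ := |x - (pf:ℝ)/(qf:ℝ)| with hddef
      have hqfpos : (0:ℝ) < (qf:ℝ) := by linarith
      have hQ0pos : (0:ℝ) < Q0 := lt_of_lt_of_le one_pos (hQ1 (k+1))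
      -- pf/qf = P0/Q0
      have heqR : (pf:ℝ) * Q0 = (cfP (cfA x) (k+1) : ℝ) * (qf:ℝ) := by
        rw [hQ0def]; exact_mod_cast congrArg (fun z : ℤ => (z:ℝ)) heq
      have hfrac : (pf:ℝ)/(qf:ℝ) = (cfP (cfA x) (k+1) : ℝ) / Q0 :=
        (div_eq_div_iff (ne_of_gt hqfpos) (ne_of_gt hQ0pos)).2 (by linarith [heqR])
      have hE : |Ee x (k+1)| = Q0 * d := by
        rw [hddef, hfrac]
        unfold Ee
        rw [← abs_of_pos hQ0pos, ← abs_mul]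
        congr 1
        rw [hQ0def, Nat.abs_cast]
        have hne : ((cfQ (cfA x) (k+1) : ℕ) : ℝ) ≠ 0 := ne_of_gt hQ0pos
        field_simp
      have hL := L1 hx0 hirr (k+1)
      rw [hE] at hL
      have hQrec : Q2 = A * Q0 + (cfQ (cfA x) k : ℝ) := by
        rw [hQ2def, hQ0def, hAdef]
        show ((cfA x (k + 2) * cfQ (cfA x) (k + 1) + cfQ (cfA x) k : ℕ) : ℝ) = _
        push_cast; ring
      have hQk : (cfQ (cfA x) k : ℝ) ≤ Q0 := by
        rw [hQ0def]; exact_mod_cast cfQ_le_succ hb k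
      have hsum : Q2 + Q0 ≤ (A + 2) * Q0 := by rw [hQrec]; nlinarith [hA1R (k+1)]
      -- 1 < (A+2) * Q0^2 * d
      have hd0 : 0 ≤ d := abs_nonneg _
      have hkey : 1 < (A + 2) * Q0^2 * d := by nlinarith [hL, hsum, hQ0pos]
      have hΨqfpos : 0 < Ψ (qf:ℝ) := by linarith
      have hdlt : d * ((qf:ℝ)^2 * (3 * Ψ (qf:ℝ))) < 1 := by
        rw [hddef]
        rw [lt_div_iff₀ (by positivity : (0:ℝ) < (qf:ℝ)^2 * (3 * Ψ (qf:ℝ)))] at happ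
        exact happ
      have hQ0le : Q0 ≤ (qf:ℝ) := by rw [hQ0def]; exact_mod_cast hle
      have hApos : (0:ℝ) < A + 2 := by linarith [hA1R (k+1)]
      have hdpos : 0 < d := by
        rcases hd0.lt_or_eq with hdd | hdd
        · exact hdd
        · exfalso; rw [← hdd] at hkey; norm_num at hkey
      have h3Ψ : 3 * Ψ ((qf:ℝ)) < A + 2 := by
        have hq2 : Q0^2 ≤ (qf:ℝ)^2 := by nlinarith
        have s1 : 1 < (A + 2) * (qf:ℝ)^2 * d := by
          nlinarith [hkey, mul_nonneg (mul_nonneg hApos.le (sub_nonneg.2 hq2)) hd0]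
        have s2 : (qf:ℝ)^2 * (3 * Ψ (qf:ℝ)) < (A+2) * (qf:ℝ)^2 := by
          nlinarith [s1, hdlt]
        nlinarith [s2, sq_nonneg (qf:ℝ), hqfR1]
      have hΨmono2 : Ψ Q0 ≤ Ψ (qf:ℝ) := hmono Q0 (qf:ℝ) (hQ1 (k+1)) hQ0le
      rcases le_or_gt 1 (Ψ Q0) with hc | hc
      · show Ψ Q0 < (cfA x (k+2) : ℝ)
        rw [← hAdef]
        linarith
      · show Ψ Q0 < (cfA x (k+2) : ℝ)
        rw [← hAdef]
        linarith [hA1R (k+1)]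
    · push_neg at hcase
      refine ⟨m+1, Nat.lt_succ_self m, by omega, ?_⟩
      have h1 : Ψ ((cfQ (cfA x) (m+1) : ℝ)) ≤ 2/3 := hcase _ (hQ1 (m+1))
      linarith [hA1R (m+1)]
  constructor
  · apply Set.infinite_of_forall_exists_gt
    intro m
    obtain ⟨n, h1, h2, h3⟩ := main m
    exact ⟨n, ⟨h2, h3⟩, h1⟩
  · apply Set.infinite_of_forall_exists_gt
    intro m
    obtain ⟨n, h1, h2, h3⟩ := main m
    refine ⟨n, ⟨h2, ?_⟩, h1⟩
    obtain ⟨j, rfl⟩ : ∃ j, n = j+1 := ⟨n-1, by omega⟩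
    have ha := hA1R j
    have hb2 := hA1R (j+1)
    nlinarith
end

section
/- Let ψ : [t₀,∞) → ℝ₊ be non-increasing with t·ψ(t) < 1 for all t ≥ t₀, and set Ψ(t) = 1/(1 − t·ψ(t)) − 1. If x ∈ [0,1) is irrational and a_{n+1}(x)·aₙ(x) ≤ Ψ(qₙ(x))/4 for all sufficiently large n, then x is ψ-Dirichlet improvable, i.e., for all sufficiently large t the system |qx − p| < ψ(t), |q| < t has a nontrivial integer solution. -/
open Set MeasureTheory Filter

/-- `x` is `ψ`-Dirichlet improvable: for all sufficiently large `t` the system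
`|qx - p| < ψ(t)`, `|q| < t` has a nontrivial integer solution. -/
def DirichletImprovable (ψ : ℝ → ℝ) (x : ℝ) : Prop :=
  ∃ N : ℝ, ∀ t : ℝ, N < t → ∃ p q : ℤ, q ≠ 0 ∧ |(q : ℝ) * x - p| < ψ t ∧ |(q : ℝ)| < t


def cfPm (b : ℕ → ℕ) : ℕ → ℕ
  | 0 => 1
  | n + 1 => cfP b n
def cfQm (b : ℕ → ℕ) : ℕ → ℕ
  | 0 => 0
  | n + 1 => cfQ b n

lemma cfP_rec (b : ℕ → ℕ) (n : ℕ) : cfP b (n+1) = b (n+1) * cfP b n + cfPm b n := by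
  cases n with
  | zero => simp [cfP, cfPm]
  | succ m => rfl

lemma cfQ_rec (b : ℕ → ℕ) (n : ℕ) : cfQ b (n+1) = b (n+1) * cfQ b n + cfQm b n := by
  cases n with
  | zero => simp [cfQ, cfQm]
  | succ m => rfl

lemma cfQ_pos_s9 (b : ℕ → ℕ) (hb1 : 1 ≤ b 1) : ∀ n, 1 ≤ cfQ b n
  | 0 => le_rfl
  | 1 => hb1
  | (n+2) => le_trans (cfQ_pos_s9 b hb1 n) (Nat.le_add_left _ _)

lemma cfQ_le_succ (b : ℕ → ℕ) (hb : ∀ i, 1 ≤ i → 1 ≤ b i) : ∀ n, cfQ b n ≤ cfQ b (n+1) := by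
  intro n
  rw [cfQ_rec]
  calc cfQ b n ≤ b (n+1) * cfQ b n := Nat.le_mul_of_pos_left _ (hb (n+1) (by omega))
  _ ≤ _ := Nat.le_add_right _ _

lemma cfQm_le (b : ℕ → ℕ) (hb : ∀ i, 1 ≤ i → 1 ≤ b i) : ∀ n, cfQm b n ≤ cfQ b n
  | 0 => by simp [cfQm, cfQ]
  | (n+1) => cfQ_le_succ b hb n

lemma cfQ_mono (b : ℕ → ℕ) (hb : ∀ i, 1 ≤ i → 1 ≤ b i) : Monotone (cfQ b) :=
  monotone_nat_of_le_succ (cfQ_le_succ b hb)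

lemma le_cfQ (b : ℕ → ℕ) (hb : ∀ i, 1 ≤ i → 1 ≤ b i) : ∀ n, n ≤ cfQ b (n+1) := by
  intro n
  induction n with
  | zero => omega
  | succ m ih =>
    have h1 := cfQ_pos_s9 b (hb 1 le_rfl) m
    have : cfQ b (m+2) = b (m+2) * cfQ b (m+1) + cfQ b m := rfl
    have h2 : 1 ≤ b (m+2) := hb _ (by omega)
    nlinarith

lemma cf_det (b : ℕ → ℕ) : ∀ n, (cfPm b n : ℤ) * cfQ b n - cfP b n * cfQm b n = (-1)^n := by
  intro n
  induction n with
  | zero => simp [cfPm, cfQm, cfP, cfQ]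
  | succ m ih =>
    rw [cfP_rec, cfQ_rec, pow_succ]
    show ((cfP b m : ℤ)) * _ - _ * (cfQ b m : ℤ) = _
    push_cast
    linear_combination (-1 : ℤ) * ih

lemma gauss_aux {x : ℝ} (hx : x ∈ Set.Ico (0:ℝ) 1) (hirr : Irrational x) :
    ∀ n, Irrational (gaussMap^[n] x) ∧ gaussMap^[n] x ∈ Set.Ioo (0:ℝ) 1 := by
  intro n
  induction n with
  | zero =>
    refine ⟨hirr, ⟨?_, hx.2⟩⟩
    rcases hx.1.lt_or_eq with h | h
    · exact h
    · exact absurd h.symm (by simpa using hirr.ne_int 0)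
  | succ m ih =>
    obtain ⟨hi, h0, h1⟩ := ih
    rw [Function.iterate_succ_apply']
    have hinv : Irrational (gaussMap^[m] x)⁻¹ := hi.inv
    have hfr : Irrational (gaussMap (gaussMap^[m] x)) := by
      unfold gaussMap
      rw [Int.fract]
      exact hinv.sub_intCast _
    refine ⟨hfr, ?_, ?_⟩
    · rcases (Int.fract_nonneg (gaussMap^[m] x)⁻¹).lt_or_eq with h | h
      · exact h
      · exact absurd h.symm (by simpa [gaussMap] using hfr.ne_int 0)
    · exact Int.fract_lt_one _

lemma inv_eq {x : ℝ} (hx : x ∈ Set.Ico (0:ℝ) 1) (hirr : Irrational x) (n : ℕ) :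
    (gaussMap^[n] x)⁻¹ = (cfA x (n+1) : ℝ) + gaussMap^[n+1] x := by
  have h0 := (gauss_aux hx hirr n).2.1
  have hcf : cfA x (n+1) = ⌊(gaussMap^[n] x)⁻¹⌋₊ := by simp [cfA]
  rw [Function.iterate_succ_apply', hcf]
  show _ = _ + Int.fract (gaussMap^[n] x)⁻¹
  rw [Int.fract]
  rw [natCast_floor_eq_intCast_floor (by positivity)]
  ring

lemma one_le_a {x : ℝ} (hx : x ∈ Set.Ico (0:ℝ) 1) (hirr : Irrational x) (n : ℕ) :
    1 ≤ cfA x (n+1) := by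
  have h := (gauss_aux hx hirr n).2
  have h1 : (1:ℝ) ≤ (gaussMap^[n] x)⁻¹ := (one_le_inv₀ h.1).2 h.2.le
  have hcf : cfA x (n+1) = ⌊(gaussMap^[n] x)⁻¹⌋₊ := by simp [cfA]
  rw [hcf]
  exact Nat.le_floor (by exact_mod_cast h1)

lemma cf_identity {x : ℝ} (hx : x ∈ Set.Ico (0:ℝ) 1) (hirr : Irrational x) :
    ∀ n, x * ((cfQ (cfA x) n : ℝ) + (cfQm (cfA x) n : ℝ) * gaussMap^[n] x)
        = (cfP (cfA x) n : ℝ) + (cfPm (cfA x) n : ℝ) * gaussMap^[n] x := by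
  intro n
  induction n with
  | zero => simp [cfP, cfQ, cfPm, cfQm]
  | succ m ih =>
    have hy0 : gaussMap^[m] x ≠ 0 := ne_of_gt (gauss_aux hx hirr m).2.1
    have hyy : (gaussMap^[m] x) * ((cfA x (m+1) : ℝ) + gaussMap^[m+1] x) = 1 := by
      rw [← inv_eq hx hirr m]
      field_simp
    have hP : (cfP (cfA x) (m+1) : ℝ) = (cfA x (m+1) : ℝ) * cfP (cfA x) m + cfPm (cfA x) m := by
      rw [cfP_rec]; push_cast; ring
    have hQ : (cfQ (cfA x) (m+1) : ℝ) = (cfA x (m+1) : ℝ) * cfQ (cfA x) m + cfQm (cfA x) m := by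
      rw [cfQ_rec]; push_cast; ring
    have hQm : (cfQm (cfA x) (m+1) : ℝ) = (cfQ (cfA x) m : ℝ) := rfl
    have hPm : (cfPm (cfA x) (m+1) : ℝ) = (cfP (cfA x) m : ℝ) := rfl
    rw [hP, hQ, hQm, hPm]
    linear_combination ((cfA x (m+1) : ℝ) + gaussMap^[m+1] x) * ih +
      ((cfPm (cfA x) m : ℝ) - x * (cfQm (cfA x) m : ℝ)) * hyy

lemma cf_abs {x : ℝ} (hx : x ∈ Set.Ico (0:ℝ) 1) (hirr : Irrational x) (n : ℕ) :
    |x * (cfQ (cfA x) n : ℝ) - (cfP (cfA x) n : ℝ)| *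
      ((cfQ (cfA x) n : ℝ) + (cfQm (cfA x) n : ℝ) * gaussMap^[n] x) = gaussMap^[n] x := by
  have hy := (gauss_aux hx hirr n).2.1
  have hQ1 : (1:ℝ) ≤ (cfQ (cfA x) n : ℝ) := by
    exact_mod_cast cfQ_pos_s9 (cfA x) (one_le_a hx hirr 0) n
  have hQm0 : (0:ℝ) ≤ (cfQm (cfA x) n : ℝ) := by positivity
  have hd : (0:ℝ) < (cfQ (cfA x) n : ℝ) + (cfQm (cfA x) n : ℝ) * gaussMap^[n] x := by
    nlinarith
  have ih := cf_identity hx hirr n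
  have e1 : x * (cfQ (cfA x) n : ℝ) - (cfP (cfA x) n : ℝ)
      = gaussMap^[n] x * ((cfPm (cfA x) n : ℝ) - x * (cfQm (cfA x) n : ℝ)) := by
    linear_combination ih
  have det : ((cfPm (cfA x) n : ℝ) * (cfQ (cfA x) n : ℝ)
      - (cfP (cfA x) n : ℝ) * (cfQm (cfA x) n : ℝ)) = (-1)^n := by
    have := cf_det (cfA x) n
    exact_mod_cast congrArg (Int.cast : ℤ → ℝ) this
  have e2 : ((cfPm (cfA x) n : ℝ) - x * (cfQm (cfA x) n : ℝ)) *
      ((cfQ (cfA x) n : ℝ) + (cfQm (cfA x) n : ℝ) * gaussMap^[n] x) = (-1)^n := by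
    linear_combination det - (cfQm (cfA x) n : ℝ) * ih
  have e3 : |(cfPm (cfA x) n : ℝ) - x * (cfQm (cfA x) n : ℝ)| *
      ((cfQ (cfA x) n : ℝ) + (cfQm (cfA x) n : ℝ) * gaussMap^[n] x) = 1 := by
    rw [← abs_of_pos hd, ← abs_mul, e2]
    simp [abs_pow]
  rw [e1, abs_mul, abs_of_pos hy, mul_assoc, e3, mul_one]

lemma gauss_mul {x : ℝ} (hx : x ∈ Set.Ico (0:ℝ) 1) (hirr : Irrational x) (n : ℕ) :
    gaussMap^[n] x * ((cfA x (n+1) : ℝ) + gaussMap^[n+1] x) = 1 := by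
  rw [← inv_eq hx hirr n]
  exact mul_inv_cancel₀ (ne_of_gt (gauss_aux hx hirr n).2.1)
set_option maxHeartbeats 1000000 in
theorem kleinbock_wadleigh_improvable (t₀ : ℝ) (ht₀ : 1 ≤ t₀) (ψ : ℝ → ℝ)
    (hψpos : ∀ t, t₀ ≤ t → 0 < ψ t)
    (hψmono : ∀ s t : ℝ, t₀ ≤ s → s ≤ t → ψ t ≤ ψ s)
    (hψlt : ∀ t, t₀ ≤ t → t * ψ t < 1)
    (Ψ : ℝ → ℝ) (hΨ : ∀ t, Ψ t = 1 / (1 - t * ψ t) - 1)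
    (x : ℝ) (hx : x ∈ Set.Ico (0 : ℝ) 1) (hirr : Irrational x)
    (h : ∃ N : ℕ, ∀ n, N ≤ n →
      (cfA x (n + 1) : ℝ) * (cfA x n : ℝ) ≤ Ψ ((cfQ (cfA x) n : ℝ)) / 4) :
    DirichletImprovable ψ x := by
  obtain ⟨N₀, hN⟩ := h
  set a := cfA x with ha
  have hb : ∀ i, 1 ≤ i → 1 ≤ a i := by
    intro i hi
    obtain ⟨j, rfl⟩ : ∃ j, i = j + 1 := ⟨i - 1, by omega⟩
    exact one_le_a hx hirr j
  set M := max N₀ ⌈t₀⌉₊ with hM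
  have key : ∀ n, M ≤ n → |x * (cfQ a n : ℝ) - (cfP a n : ℝ)| < ψ ((cfQ a (n+1) : ℝ)) := by
    intro n hn
    set u := ((cfQ a (n+1) : ℝ)) with hu
    have hut : t₀ ≤ u := by
      have h1 : (n : ℝ) ≤ u := by rw [hu]; exact_mod_cast le_cfQ a hb n
      have h2 : t₀ ≤ (⌈t₀⌉₊ : ℝ) := Nat.le_ceil t₀
      have h3 : ((⌈t₀⌉₊ : ℕ) : ℝ) ≤ (n : ℝ) := by exact_mod_cast le_trans (le_max_right N₀ _) hn
      linarith
    have hc : 0 < ψ u := hψpos u hut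
    have hg : 0 < 1 - u * ψ u := by linarith [hψlt u hut]
    have hhyp := hN (n+1) (by omega)
    rw [hΨ] at hhyp
    have hy' := (gauss_aux hx hirr (n+1)).2
    have hy'' := (gauss_aux hx hirr (n+2)).2
    have h1 : gaussMap^[n+1] x * ((a (n+2) : ℝ) + gaussMap^[n+2] x) = 1 :=
      gauss_mul hx hirr (n+1)
    set y' := gaussMap^[n+1] x with hy'def
    have hA1 : (1:ℝ) ≤ (a (n+1) : ℝ) := by exact_mod_cast one_le_a hx hirr n
    have hA2 : (1:ℝ) ≤ (a (n+2) : ℝ) := by exact_mod_cast one_le_a hx hirr (n+1)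
    have hx' : 1 < y' * ((a (n+2) : ℝ) + 1) := by nlinarith [hy''.2, hy'.1]
    have hQpos : (1:ℝ) ≤ (cfQ a n : ℝ) := by exact_mod_cast cfQ_pos_s9 a (hb 1 le_rfl) n
    have hQm : (cfQm a n : ℝ) ≤ (cfQ a n : ℝ) := by exact_mod_cast cfQm_le a hb n
    have hQmpos : (0:ℝ) ≤ (cfQm a n : ℝ) := by positivity
    have hQrec : u = (a (n+1) : ℝ) * cfQ a n + cfQm a n := by
      rw [hu, cfQ_rec]; push_cast; ring
    have hyn := (gauss_aux hx hirr n).2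
    have hyy : gaussMap^[n] x * ((a (n+1) : ℝ) + y') = 1 :=
      gauss_mul hx hirr n
    have habs := cf_abs hx hirr n
    have hden : ((cfQ a n : ℝ) + (cfQm a n : ℝ) * gaussMap^[n] x) * ((a (n+1):ℝ) + y')
        = u + (cfQ a n : ℝ) * y' := by
      rw [hQrec]
      linear_combination (cfQm a n : ℝ) * hyy
    have hE : |x * (cfQ a n : ℝ) - (cfP a n : ℝ)| * (u + (cfQ a n : ℝ) * y') = 1 := by
      rw [← hden, ← mul_assoc, habs, hyy]
    have hDpos : 0 < u + (cfQ a n:ℝ) * y' := by nlinarith [hy'.1]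
    have h4 : 4 * ((a (n+2):ℝ) * (a (n+1))) * (1 - u * ψ u) ≤ u * ψ u := by
      have hfe : (1/(1 - u * ψ u)) * (1 - u * ψ u) = 1 := by field_simp
      have hmul := mul_le_mul_of_nonneg_right hhyp hg.le
      nlinarith [hmul, hfe]
    have h5 : u ≤ ((a (n+1):ℝ) + 1) * cfQ a n := by
      rw [hQrec]; nlinarith
    have e6 : ((a (n+1):ℝ)+1)*((a (n+2):ℝ)+1) ≤ 4*((a (n+2):ℝ)*(a (n+1))) := by nlinarith
    have e7 : (1 - u * ψ u) * (((a (n+1):ℝ)+1)*((a (n+2):ℝ)+1)) ≤ u * ψ u := by nlinarith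
    have e8 : u * ψ u ≤ ((a (n+1):ℝ)+1) * cfQ a n * ψ u := by nlinarith
    have e9 : ((a (n+1):ℝ)+1) * cfQ a n * ψ u
        < ((a (n+1):ℝ)+1) * cfQ a n * ψ u * (y' * ((a (n+2):ℝ)+1)) := by
      have pos : 0 < ((a (n+1):ℝ)+1) * cfQ a n * ψ u := by positivity
      nlinarith
    have e10 : (1 - u * ψ u) < (cfQ a n : ℝ) * y' * ψ u := by
      have hpos : (0:ℝ) < ((a (n+1):ℝ)+1)*((a (n+2):ℝ)+1) := by positivity
      have : (1 - u * ψ u) * (((a (n+1):ℝ)+1)*((a (n+2):ℝ)+1))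
          < ((cfQ a n : ℝ) * y' * ψ u) * (((a (n+1):ℝ)+1)*((a (n+2):ℝ)+1)) := by nlinarith
      exact lt_of_mul_lt_mul_right this hpos.le
    have hmain : 1 < ψ u * (u + (cfQ a n : ℝ) * y') := by nlinarith
    have : |x * (cfQ a n : ℝ) - (cfP a n : ℝ)| * (u + (cfQ a n:ℝ) * y')
        < ψ u * (u + (cfQ a n:ℝ) * y') := by rw [hE]; exact hmain
    exact lt_of_mul_lt_mul_right this hDpos.le
  refine ⟨max t₀ ((cfQ a M : ℝ)), ?_⟩
  intro t ht
  have htt0 : t₀ < t := lt_of_le_of_lt (le_max_left _ _) ht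
  have htQM : (cfQ a M : ℝ) < t := lt_of_le_of_lt (le_max_right _ _) ht
  have hex : ∃ k, t ≤ (cfQ a k : ℝ) := by
    refine ⟨⌈t⌉₊ + 1, ?_⟩
    have h1 : ((⌈t⌉₊:ℕ) : ℝ) ≤ (cfQ a (⌈t⌉₊+1) : ℝ) := by exact_mod_cast le_cfQ a hb ⌈t⌉₊
    exact le_trans (Nat.le_ceil t) h1
  classical
  set k := Nat.find hex with hkdef
  have hk : t ≤ (cfQ a k : ℝ) := Nat.find_spec hex
  have hMk : M < k := by
    by_contra hcon
    push_neg at hcon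
    have : (cfQ a k : ℝ) ≤ (cfQ a M : ℝ) := by exact_mod_cast cfQ_mono a hb hcon
    linarith
  obtain ⟨n, hkn⟩ : ∃ n, k = n + 1 := ⟨k - 1, by omega⟩
  rw [hkn] at hk
  have hn : (cfQ a n : ℝ) < t := by
    have := Nat.find_min hex (show n < k by omega)
    push_neg at this
    exact this
  refine ⟨(cfP a n : ℤ), (cfQ a n : ℤ), ?_, ?_, ?_⟩
  · have := cfQ_pos_s9 a (hb 1 le_rfl) n
    simp only [ne_eq, Nat.cast_eq_zero]
    omega
  · have hkey := key n (by omega)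
    have hmono : ψ ((cfQ a (n+1) : ℝ)) ≤ ψ t := hψmono t (cfQ a (n+1)) htt0.le hk
    have heq : |((cfQ a n : ℤ) : ℝ) * x - ((cfP a n : ℤ) : ℝ)|
        = |x * (cfQ a n : ℝ) - (cfP a n : ℝ)| := by
      push_cast
      rw [mul_comm]
    rw [heq]
    linarith
  · have : |((cfQ a n : ℤ) : ℝ)| = (cfQ a n : ℝ) := by
      push_cast
      exact abs_of_nonneg (by positivity)
    rw [this]
    exact hn
end

section
/- Let Ψ : [1,∞) → ℝ₊ be non-decreasing, s ∈ (0,1), and suppose ∑_{t≥1} t·(1/(t²Ψ(t)))^s < ∞. Then H^s(K(Ψ)) = 0, where K(Ψ) = {x ∈ [0,1) : |x − p/q| < 1/(q²Ψ(q)) for infinitely many (p,q) ∈ ℤ×ℕ}. -/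
open MeasureTheory Filter Set EMetric
open scoped ENNReal Topology

/-- Auxiliary covering family for the Jarník convergence theorem: for `N : ℕ` and
`(n, p) : ℕ × ℤ`, an interval of radius `rr (N + n)` around `p / (N + n)`, provided
`p` lies in the relevant range, and `∅` otherwise. -/
def jarnikCover (rr : ℕ → ℝ) (N : ℕ) (np : ℕ × ℤ) : Set ℝ :=
  if -((N + np.1 : ℕ) : ℤ) < np.2 ∧ np.2 < 2 * ((N + np.1 : ℕ) : ℤ) then
    Set.Icc ((np.2 : ℝ) / ((N + np.1 : ℕ) : ℝ) - rr (N + np.1))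
      ((np.2 : ℝ) / ((N + np.1 : ℕ) : ℝ) + rr (N + np.1))
  else ∅

theorem jarnik_convergence (Ψ : ℝ → ℝ) (hpos : ∀ t, 1 ≤ t → 0 < Ψ t)
    (hmono : ∀ s t : ℝ, 1 ≤ s → s ≤ t → Ψ s ≤ Ψ t)
    (s : ℝ) (hs : s ∈ Set.Ioo (0 : ℝ) 1)
    (hconv : Summable (fun t : ℕ => (t : ℝ) * (1 / ((t : ℝ) ^ 2 * Ψ t)) ^ s)) :
    (MeasureTheory.Measure.hausdorffMeasure s : MeasureTheory.Measure ℝ)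
      {x ∈ Set.Ico (0 : ℝ) 1 |
        {pq : ℤ × ℕ | 0 < pq.2 ∧
          |x - (pq.1 : ℝ) / pq.2| < 1 / ((pq.2 : ℝ) ^ 2 * Ψ pq.2)}.Infinite} = 0 := by
  obtain ⟨hs0, hs1⟩ := hs
  set rr : ℕ → ℝ := fun q => 1 / ((q : ℝ) ^ 2 * Ψ q) with hrr_def
  have hrrpos : ∀ q : ℕ, 1 ≤ q → 0 < rr q := by
    intro q hq
    have h1 : (1 : ℝ) ≤ q := by exact_mod_cast hq
    have := hpos q h1
    exact div_pos one_pos (by positivity)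
  have hrr0 : ∀ q : ℕ, 0 ≤ rr q := by
    intro q
    rcases Nat.eq_zero_or_pos q with h | h
    · simp [hrr_def, h]
    · exact (hrrpos q h).le
  have hanti : ∀ a b : ℕ, 1 ≤ a → a ≤ b → rr b ≤ rr a := by
    intro a b ha hab
    have ha1 : (1:ℝ) ≤ (a:ℝ) := by exact_mod_cast ha
    have hab1 : (a:ℝ) ≤ (b:ℝ) := by exact_mod_cast hab
    have hΨa := hpos a ha1
    have hΨab := hmono a b ha1 hab1
    have h1 : (0:ℝ) < (a:ℝ) ^ 2 * Ψ a := by positivity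
    apply one_div_le_one_div_of_le h1
    have h2 : (a:ℝ)^2 ≤ (b:ℝ)^2 := by nlinarith
    nlinarith
  -- the series terms tend to zero, hence rr tends to zero
  have hterm : Tendsto (fun q : ℕ => (q : ℝ) * rr q ^ s) atTop (𝓝 0) :=
    hconv.tendsto_atTop_zero
  have hrrs : Tendsto (fun q : ℕ => rr q ^ s) atTop (𝓝 0) := by
    apply squeeze_zero' (Filter.Eventually.of_forall fun q => Real.rpow_nonneg (hrr0 q) s)
      _ hterm
    filter_upwards [eventually_ge_atTop 1] with q hq
    have h1 : (1:ℝ) ≤ (q:ℝ) := by exact_mod_cast hq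
    nlinarith [Real.rpow_nonneg (hrr0 q) s]
  have hrrtend : Tendsto rr atTop (𝓝 0) := by
    have hcont : ContinuousAt (fun x : ℝ => x ^ (1/s)) 0 :=
      Real.continuousAt_rpow_const 0 (1/s) (Or.inr (by positivity))
    have h0 : (0:ℝ) ^ (1/s) = 0 := Real.zero_rpow (by positivity)
    have hcomp : Tendsto (fun q : ℕ => (rr q ^ s) ^ (1/s)) atTop (𝓝 0) := by
      have := hcont.tendsto.comp hrrs
      rwa [h0] at this
    refine hcomp.congr fun q => ?_
    rw [← Real.rpow_mul (hrr0 q), mul_one_div, div_self hs0.ne', Real.rpow_one]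
  -- choose N₀ such that rr q ≤ 1 for q ≥ N₀
  obtain ⟨N₀, hN₀⟩ : ∃ N₀ : ℕ, ∀ q ≥ N₀, rr q ≤ 1 :=
    eventually_atTop.mp (hrrtend.eventually (eventually_le_nhds one_pos))
  set E : Set ℝ := {x ∈ Set.Ico (0 : ℝ) 1 |
        {pq : ℤ × ℕ | 0 < pq.2 ∧
          |x - (pq.1 : ℝ) / pq.2| < 1 / ((pq.2 : ℝ) ^ 2 * Ψ pq.2)}.Infinite} with hE_def
  set R : ℕ → ℝ≥0∞ := fun N => ENNReal.ofReal (2 * rr N) with hR_def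
  have hR : Tendsto R atTop (𝓝 0) := by
    have h2 : Tendsto (fun N : ℕ => 2 * rr N) atTop (𝓝 (2 * 0)) := hrrtend.const_mul 2
    rw [mul_zero] at h2
    simpa [hR_def] using ENNReal.tendsto_ofReal h2
  -- diameter bound
  have ht : ∀ᶠ N in atTop, ∀ i : ℕ × ℤ, diam (jarnikCover rr N i) ≤ R N := by
    filter_upwards [eventually_ge_atTop 1] with N hN i
    rcases i with ⟨n, p⟩
    by_cases hc : (-((N + n : ℕ) : ℤ) < p ∧ p < 2 * ((N + n : ℕ) : ℤ))
    · rw [jarnikCover, if_pos hc, EMetric.diam, Real.ediam_Icc]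
      have heq : ((p : ℝ) / ((N + n : ℕ) : ℝ) + rr (N + n)) -
          ((p : ℝ) / ((N + n : ℕ) : ℝ) - rr (N + n)) = 2 * rr (N + n) := by ring
      rw [heq]
      exact ENNReal.ofReal_le_ofReal (by
        have := hanti N (N + n) hN (Nat.le_add_right N n)
        linarith)
    · rw [jarnikCover, if_neg hc]
      simp [EMetric.diam]
  -- covering property
  have hst : ∀ᶠ N in atTop, E ⊆ ⋃ i : ℕ × ℤ, jarnikCover rr N i := by
    filter_upwards [eventually_ge_atTop (max 1 N₀)] with N hN x hx
    have hN1 : 1 ≤ N := le_trans (le_max_left _ _) hN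
    have hNN₀ : N₀ ≤ N := le_trans (le_max_right _ _) hN
    obtain ⟨⟨hx0, hx1⟩, hxinf⟩ := hx
    -- there is a pair with q ≥ N
    obtain ⟨⟨p, q⟩, hpq, hqN⟩ : ∃ pq : ℤ × ℕ, (0 < pq.2 ∧
        |x - (pq.1 : ℝ) / pq.2| < rr pq.2) ∧ N ≤ pq.2 := by
      by_contra hcon
      push_neg at hcon
      apply hxinf
      set B : ℤ := ⌈(N : ℝ) * (1 + rr 1)⌉ with hB_def
      apply Set.Finite.subset ((Set.finite_Icc (-B) B).prod (Set.finite_Iio N))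
      rintro ⟨p, q⟩ ⟨hq0, habs⟩
      have hqN' : q < N := hcon (p, q) ⟨hq0, habs⟩
      have hq1 : (1:ℝ) ≤ (q:ℝ) := by exact_mod_cast hq0
      have hrrq1 : rr q ≤ rr 1 := hanti 1 q le_rfl hq0
      have habs' : |x - (p : ℝ) / q| < rr q := habs
      have hxb : |x| ≤ 1 := by rw [abs_le]; constructor <;> linarith
      have hpq_abs : |(p : ℝ) / q| < 1 + rr 1 := by
        have h3 := abs_sub_abs_le_abs_sub ((p:ℝ)/q) x
        rw [abs_sub_comm] at h3
        linarith
      have hqpos : (0:ℝ) < (q:ℝ) := by linarith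
      have hp_abs : |(p : ℝ)| < (q:ℝ) * (1 + rr 1) := by
        rw [abs_div, abs_of_pos hqpos, div_lt_iff₀ hqpos] at hpq_abs
        linarith [hpq_abs]
      have hqNr : (q:ℝ) ≤ (N:ℝ) := by exact_mod_cast hqN'.le
      have hrr1pos : (0:ℝ) < 1 + rr 1 := by have := hrr0 1; linarith
      have hp_abs2 : |(p : ℝ)| ≤ (N:ℝ) * (1 + rr 1) := by nlinarith
      have hceil : (N:ℝ) * (1 + rr 1) ≤ (B:ℝ) := Int.le_ceil _
      rw [abs_le] at hp_abs2
      constructor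
      · simp only [Set.mem_Icc]
        constructor
        · exact_mod_cast (by linarith : -(B:ℝ) ≤ (p:ℝ))
        · exact_mod_cast (by linarith : (p:ℝ) ≤ (B:ℝ))
      · exact hqN'
    obtain ⟨hq0, habs⟩ := hpq
    have hq1 : 1 ≤ q := le_trans hN1 hqN
    have hqr : (0:ℝ) < (q:ℝ) := by exact_mod_cast hq1
    have hrrq1 : rr q ≤ 1 := hN₀ q (le_trans hNN₀ hqN)
    rw [abs_lt] at habs
    have hdiv_lt : (p:ℝ)/q < 2 := by linarith
    have hdiv_gt : (-1:ℝ) < (p:ℝ)/q := by linarith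
    have hpu : p < 2 * (q:ℤ) := by
      rw [div_lt_iff₀ hqr] at hdiv_lt
      exact_mod_cast (by linarith : (p:ℝ) < 2 * (q:ℝ))
    have hpl : -(q:ℤ) < p := by
      rw [lt_div_iff₀ hqr] at hdiv_gt
      exact_mod_cast (by linarith : -(q:ℝ) < (p:ℝ))
    refine Set.mem_iUnion.2 ⟨(q - N, p), ?_⟩
    have hq_eq : N + (q - N) = q := Nat.add_sub_cancel' hqN
    rw [jarnikCover]
    simp only [hq_eq]
    rw [if_pos ⟨hpl, hpu⟩]
    exact Set.mem_Icc.2 ⟨by linarith, by linarith⟩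
  -- the dominating series
  set G : ℕ → ℝ≥0∞ := fun q => ENNReal.ofReal (6 * ((q:ℝ) * rr q ^ s)) with hG_def
  have hG_ne_top : ∑' q, G q ≠ ∞ := by
    have hnonneg : ∀ q : ℕ, 0 ≤ 6 * ((q:ℝ) * rr q ^ s) := by
      intro q
      have := Real.rpow_nonneg (hrr0 q) s
      positivity
    have hsum6 : Summable (fun q : ℕ => 6 * ((q:ℝ) * rr q ^ s)) := hconv.mul_left 6
    rw [← ENNReal.ofReal_tsum_of_nonneg hnonneg hsum6]
    exact ENNReal.ofReal_ne_top
  have htail : Tendsto (fun N : ℕ => ∑' n : ℕ, G (n + N)) atTop (𝓝 0) :=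
    ENNReal.tendsto_sum_nat_add G hG_ne_top
  -- sum bound
  have key : ∀ᶠ N in atTop,
      (∑' i : ℕ × ℤ, diam (jarnikCover rr N i) ^ s) ≤ ∑' n : ℕ, G (n + N) := by
    filter_upwards [eventually_ge_atTop 1] with N hN
    have hprod : (∑' i : ℕ × ℤ, diam (jarnikCover rr N i) ^ s) =
        ∑' n : ℕ, ∑' p : ℤ, diam (jarnikCover rr N (n, p)) ^ s :=
        ENNReal.tsum_prod (f := fun n p => diam (jarnikCover rr N (n, p)) ^ s)
    rw [hprod]
    apply ENNReal.tsum_le_tsum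
    intro n
    have hq1 : 1 ≤ N + n := le_trans hN (Nat.le_add_right N n)
    have hqr : (0:ℝ) < ((N + n : ℕ):ℝ) := by exact_mod_cast hq1
    have hrrq : 0 < rr (N + n) := hrrpos _ hq1
    -- reduce to a finite sum
    have hzero : ∀ p : ℤ, p ∉ Finset.Ioo (-((N + n : ℕ):ℤ)) (2 * ((N + n : ℕ):ℤ)) →
        diam (jarnikCover rr N (n, p)) ^ s = 0 := by
      intro p hp
      rw [Finset.mem_Ioo] at hp
      rw [jarnikCover, if_neg hp]
      simp [EMetric.diam, ENNReal.zero_rpow_of_pos hs0]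
    rw [tsum_eq_sum hzero]
    have hbound : ∀ p ∈ Finset.Ioo (-((N + n : ℕ):ℤ)) (2 * ((N + n : ℕ):ℤ)),
        diam (jarnikCover rr N (n, p)) ^ s ≤ ENNReal.ofReal ((2 * rr (N + n)) ^ s) := by
      intro p hp
      rw [Finset.mem_Ioo] at hp
      rw [jarnikCover, if_pos hp, EMetric.diam, Real.ediam_Icc]
      have heq : ((p : ℝ) / ((N + n : ℕ) : ℝ) + rr (N + n)) -
          ((p : ℝ) / ((N + n : ℕ) : ℝ) - rr (N + n)) = 2 * rr (N + n) := by ring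
      rw [heq, ENNReal.ofReal_rpow_of_pos (by linarith)]
    calc (∑ p ∈ Finset.Ioo (-((N + n : ℕ):ℤ)) (2 * ((N + n : ℕ):ℤ)),
            diam (jarnikCover rr N (n, p)) ^ s)
        ≤ (Finset.Ioo (-((N + n : ℕ):ℤ)) (2 * ((N + n : ℕ):ℤ))).card •
            ENNReal.ofReal ((2 * rr (N + n)) ^ s) := Finset.sum_le_card_nsmul _ _ _ hbound
      _ ≤ (3 * (N + n)) • ENNReal.ofReal ((2 * rr (N + n)) ^ s) := by
          apply nsmul_le_nsmul_left (zero_le)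
          rw [Int.card_Ioo]
          omega
      _ ≤ G (n + N) := by
          rw [nsmul_eq_mul]
          have hcast : ((3 * (N + n) : ℕ) : ℝ≥0∞) = ENNReal.ofReal ((3 * (N + n) : ℕ) : ℝ) :=
            (ENNReal.ofReal_natCast _).symm
          rw [hcast, ← ENNReal.ofReal_mul (by positivity)]
          apply ENNReal.ofReal_le_ofReal
          have h2s : (2:ℝ) ^ s ≤ 2 := by
            have h := Real.rpow_le_rpow_of_exponent_le (by norm_num : (1:ℝ) ≤ 2) hs1.le
            rwa [Real.rpow_one] at h
          have h2s0 : (0:ℝ) ≤ (2:ℝ) ^ s := Real.rpow_nonneg (by norm_num) s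
          have hmul : (2 * rr (N + n)) ^ s = 2 ^ s * rr (N + n) ^ s :=
            Real.mul_rpow (by norm_num) (hrr0 _)
          have hrs0 : (0:ℝ) ≤ rr (N + n) ^ s := Real.rpow_nonneg (hrr0 _) s
          rw [hmul, Nat.add_comm n N]
          have hfin : 0 ≤ ((N + n : ℕ):ℝ) * rr (N + n) ^ s * (2 - 2 ^ s) :=
            mul_nonneg (mul_nonneg hqr.le hrs0) (by linarith)
          push_cast at hfin hqr ⊢
          nlinarith [hfin, hqr, hrs0, h2s0]
  -- apply the Hausdorff measure bound
  have hmain := Measure.hausdorffMeasure_le_liminf_tsum s E R hR (jarnikCover rr) ht hst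
  refine le_antisymm ?_ (zero_le)
  calc (MeasureTheory.Measure.hausdorffMeasure s : MeasureTheory.Measure ℝ) E
      ≤ liminf (fun N : ℕ => ∑' i : ℕ × ℤ, diam (jarnikCover rr N i) ^ s) atTop := hmain
    _ ≤ liminf (fun N : ℕ => ∑' n : ℕ, G (n + N)) atTop := liminf_le_liminf key
    _ = 0 := htail.liminf_eq
end

section
/- Let ε > 0 and let x ∈ (0,1) be irrational and not badly approximable (i.e., liminf_{q→∞} q·‖qx‖ = 0, where ‖·‖ is distance to the nearest integer). Then x does not belong to D((1−ε)/t), i.e., there exist arbitrarily large t for which the system |qx − p| < (1−ε)/t, 1 ≤ q < t has no integer solution. -/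
/-- For irrational `x` there are good rational approximations with arbitrarily
large denominators. -/
lemma ds_aux_good_rat {x : ℝ} (hirr : Irrational x) (n : ℕ) :
    ∃ r : ℚ, |x - (r : ℝ)| < 1 / (r.den : ℝ) ^ 2 ∧ n ≤ r.den := by
  by_contra h
  push_neg at h
  apply Real.infinite_rat_abs_sub_lt_one_div_den_sq_of_irrational hirr
  set S : Set ℚ := {q : ℚ | |x - (q : ℝ)| < 1 / (q.den : ℝ) ^ 2} with hSdef
  have hnum : ∀ r ∈ S, (r.num : ℝ) = (r : ℝ) * (r.den : ℝ) := by
    intro r _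
    have hd : ((r.den : ℝ)) ≠ 0 := by
      have := r.pos
      positivity
    have h1 : ((r.num : ℝ)) / ((r.den : ℝ)) = (r : ℝ) := by
      exact_mod_cast congrArg (fun q : ℚ => (q : ℝ)) (Rat.num_div_den r)
    field_simp at h1
    linarith [h1]
  have hbound : ∀ r ∈ S, |(r.num : ℝ)| ≤ (|x| + 1) * n := by
    intro r hr
    have hden1 : (1 : ℝ) ≤ (r.den : ℝ) := by exact_mod_cast r.pos
    have hdenn : (r.den : ℝ) ≤ (n : ℝ) := by
      have := h r hr
      exact_mod_cast le_of_lt this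
    have hclose : |x - (r : ℝ)| < 1 := by
      refine lt_of_lt_of_le hr ?_
      rw [div_le_one (by positivity)]
      nlinarith
    have hrabs : |(r : ℝ)| ≤ |x| + 1 := by
      have := abs_sub_abs_le_abs_sub (r : ℝ) x
      rw [abs_sub_comm] at hclose
      linarith
    rw [hnum r hr, abs_mul, abs_of_pos (by linarith : (0:ℝ) < (r.den : ℝ))]
    have hn1 : (1 : ℝ) ≤ (n : ℝ) := by linarith
    nlinarith [abs_nonneg (r : ℝ)]
  set M : ℤ := ⌈(|x| + 1) * n⌉ with hMdef
  have hsub : (fun r : ℚ => (r.num, r.den)) '' S ⊆ Set.Icc (-M) M ×ˢ Set.Iio n := by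
    rintro ⟨a, b⟩ ⟨r, hr, hab⟩
    obtain ⟨ha, hb⟩ := Prod.mk.injEq .. ▸ hab
    constructor
    · have h1 : |(r.num : ℝ)| ≤ ((M : ℤ) : ℝ) :=
        le_trans (hbound r hr) (Int.le_ceil _)
      have h2 : |r.num| ≤ M := by exact_mod_cast h1
      rw [← ha]
      exact Set.mem_Icc.mpr (abs_le.mp h2)
    · rw [← hb]
      exact h r hr
  have hinj : Set.InjOn (fun r : ℚ => (r.num, r.den)) S := by
    intro a _ b _ hab
    obtain ⟨h1, h2⟩ := Prod.mk.injEq .. ▸ hab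
    exact Rat.ext h1 h2
  exact Set.Finite.of_finite_image
    (Set.Finite.subset (Set.Finite.prod (Set.finite_Icc _ _) (Set.finite_Iio _)) hsub) hinj

lemma ds_aux_freq {x : ℝ} (hirr : Irrational x) :
    ∃ᶠ q : ℕ in Filter.atTop, (q : ℝ) * |(q : ℝ) * x - round ((q : ℝ) * x)| ≤ 1 := by
  rw [Filter.frequently_atTop]
  intro n
  obtain ⟨r, hr1, hr2⟩ := ds_aux_good_rat hirr n
  refine ⟨r.den, hr2, ?_⟩
  have hd1 : (1 : ℝ) ≤ (r.den : ℝ) := by exact_mod_cast r.pos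
  have hnum : (r.num : ℝ) = (r : ℝ) * (r.den : ℝ) := by
    have hd : ((r.den : ℝ)) ≠ 0 := by linarith
    have h1 : ((r.num : ℝ)) / ((r.den : ℝ)) = (r : ℝ) := by
      exact_mod_cast congrArg (fun q : ℚ => (q : ℝ)) (Rat.num_div_den r)
    field_simp at h1
    linarith [h1]
  have key : |(r.den : ℝ) * x - round ((r.den : ℝ) * x)| ≤ (r.den : ℝ) * |x - (r : ℝ)| := by
    calc |(r.den : ℝ) * x - round ((r.den : ℝ) * x)| ≤ |(r.den : ℝ) * x - (r.num : ℝ)| :=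
          round_le _ r.num
      _ = (r.den : ℝ) * |x - (r : ℝ)| := by
          rw [hnum, show (r.den : ℝ) * x - (r : ℝ) * (r.den : ℝ)
              = (r.den : ℝ) * (x - (r : ℝ)) from by ring,
            abs_mul, abs_of_pos (by linarith : (0:ℝ) < (r.den : ℝ))]
     
  calc (r.den : ℝ) * |(r.den : ℝ) * x - round ((r.den : ℝ) * x)|
      ≤ (r.den : ℝ) * ((r.den : ℝ) * |x - (r : ℝ)|) := by
        exact mul_le_mul_of_nonneg_left key (by linarith)
    _ ≤ (r.den : ℝ) * ((r.den : ℝ) * (1 / (r.den : ℝ) ^ 2)) := by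
        have := le_of_lt hr1
        gcongr
    _ = 1 := by
        field_simp


set_option maxHeartbeats 1600000 in
theorem davenport_schmidt (ε : ℝ) (hε : 0 < ε) (x : ℝ) (hx : x ∈ Set.Ioo (0 : ℝ) 1)
    (hirr : Irrational x)
    (hba : Filter.liminf (fun q : ℕ => (q : ℝ) * |(q : ℝ) * x - round ((q : ℝ) * x)|)
      Filter.atTop = 0) :
    ∀ N : ℝ, ∃ t : ℝ, N < t ∧
      ¬ ∃ p q : ℤ, 1 ≤ q ∧ (q : ℝ) < t ∧ |(q : ℝ) * x - p| < (1 - ε) / t := by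
  intro N
  -- irrationality: no integer relation
  have hxint : ∀ a b : ℤ, 1 ≤ a → (a : ℝ) * x - (b : ℝ) ≠ 0 := by
    intro a b ha h
    apply hirr
    have ha0 : (a : ℝ) ≠ 0 := by
      have : (1 : ℝ) ≤ (a : ℝ) := by exact_mod_cast ha
      linarith
    refine ⟨(b : ℚ) / (a : ℚ), ?_⟩
    push_cast
    rw [div_eq_iff ha0]
    linarith
  obtain ⟨ε', hε'def⟩ : ∃ e : ℝ, e = min ε (1/2) := ⟨_, rfl⟩
  have hε'pos : 0 < ε' := by rw [hε'def]; exact lt_min hε (by norm_num)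
  have hε'le : ε' ≤ ε := by rw [hε'def]; exact min_le_left _ _
  have hε'half : ε' ≤ 1/2 := by rw [hε'def]; exact min_le_right _ _
  have hNpos : 0 < 1/(2*(|N|+1)) := by
    have := abs_nonneg N
    positivity
  obtain ⟨δ, hδdef⟩ : ∃ d : ℝ, d = min (ε'/4) (1/(2*(|N|+1))) := ⟨_, rfl⟩
  have hδpos : 0 < δ := by rw [hδdef]; exact lt_min (by linarith) hNpos
  have hδ1 : δ ≤ ε'/4 := by rw [hδdef]; exact min_le_left _ _
  have hδ2 : δ ≤ 1/(2*(|N|+1)) := by rw [hδdef]; exact min_le_right _ _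
  -- get q₀ ≥ 1 with q₀ ‖q₀ x‖ < δ
  have hcob : Filter.IsCoboundedUnder (· ≥ ·) Filter.atTop
      (fun q : ℕ => (q : ℝ) * |(q : ℝ) * x - round ((q : ℝ) * x)|) :=
    Filter.IsCoboundedUnder.of_frequently_le (ds_aux_freq hirr)
  have hfreq := Filter.frequently_lt_of_liminf_lt hcob (by rw [hba]; exact hδpos)
  obtain ⟨q₀, hq₀1, hq₀f⟩ := Filter.frequently_atTop.mp hfreq 1
  obtain ⟨Q, hQdef⟩ : ∃ z : ℤ, z = (q₀ : ℤ) := ⟨_, rfl⟩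
  obtain ⟨P, hPdef⟩ : ∃ z : ℤ, z = round ((q₀ : ℝ) * x) := ⟨_, rfl⟩
  have hQ1 : 1 ≤ Q := by rw [hQdef]; exact_mod_cast hq₀1
  have hQA : (Q : ℝ) * |(Q : ℝ) * x - (P : ℝ)| < δ := by
    rw [hQdef, hPdef]; push_cast; exact hq₀f
  -- reduce the fraction P/Q to lowest terms
  have hgpos : 0 < Int.gcd Q P := by
    rw [Int.gcd_pos_iff]; left; omega
  obtain ⟨g, hgdef⟩ : ∃ n : ℕ, n = Int.gcd Q P := ⟨_, rfl⟩
  obtain ⟨q1, hq1def⟩ : ∃ z : ℤ, z = Q / (g : ℤ) := ⟨_, rfl⟩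
  obtain ⟨p1, hp1def⟩ : ∃ z : ℤ, z = P / (g : ℤ) := ⟨_, rfl⟩
  have hgQ : (g : ℤ) * q1 = Q := by
    rw [hq1def, hgdef]; exact Int.mul_ediv_cancel' (Int.gcd_dvd_left Q P)
  have hgP : (g : ℤ) * p1 = P := by
    rw [hp1def, hgdef]; exact Int.mul_ediv_cancel' (Int.gcd_dvd_right Q P)
  have hg1 : 1 ≤ (g : ℤ) := by rw [hgdef]; exact_mod_cast hgpos
  have hq1pos : 1 ≤ q1 := by nlinarith
  have hcop : Int.gcd q1 p1 = 1 := by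
    rw [hq1def, hp1def, hgdef]; exact Int.gcd_div_gcd_div_gcd hgpos
  obtain ⟨α, hαdef⟩ : ∃ a : ℝ, a = (q1 : ℝ) * x - (p1 : ℝ) := ⟨_, rfl⟩
  have hα0 : α ≠ 0 := by rw [hαdef]; exact hxint q1 p1 hq1pos
  have habs : 0 < |α| := abs_pos.mpr hα0
  have hgR1 : (1 : ℝ) ≤ (g : ℝ) := by exact_mod_cast hg1
  have hq1R : (1 : ℝ) ≤ (q1 : ℝ) := by exact_mod_cast hq1pos
  have hgα : (g : ℝ) * α = (Q : ℝ) * x - (P : ℝ) := by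
    have h1 : (g : ℝ) * (q1 : ℝ) = (Q : ℝ) := by exact_mod_cast congrArg Int.cast hgQ
    have h2 : (g : ℝ) * (p1 : ℝ) = (P : ℝ) := by exact_mod_cast congrArg Int.cast hgP
    rw [hαdef]
    linear_combination x * h1 - h2
  have hq1α : (q1 : ℝ) * |α| < δ := by
    have hQR2 : (Q : ℝ) = (g : ℝ) * (q1 : ℝ) := by
      exact_mod_cast (congrArg Int.cast hgQ).symm
    have habsA : |(Q : ℝ) * x - (P : ℝ)| = (g : ℝ) * |α| := by
      rw [← hgα, abs_mul, abs_of_pos (by linarith : (0:ℝ) < (g:ℝ))]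
    rw [habsA, hQR2] at hQA
    have hgg : (1 : ℝ) ≤ (g : ℝ) * (g : ℝ) := by nlinarith
    nlinarith [mul_le_mul_of_nonneg_right hgg
      (mul_nonneg (by linarith : (0:ℝ) ≤ (q1:ℝ)) (abs_nonneg α)), abs_nonneg α]
  have hαδ : |α| < δ := by nlinarith [abs_nonneg α]
  -- define t
  obtain ⟨c, hcdef⟩ : ∃ r : ℝ, r = 1 - ε'/2 := ⟨_, rfl⟩
  have hc34 : 3/4 ≤ c := by rw [hcdef]; linarith
  have hc1 : c < 1 := by rw [hcdef]; linarith
  have hcpos : 0 < c := by linarith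
  obtain ⟨t, htdef⟩ : ∃ r : ℝ, r = c / |α| := ⟨_, rfl⟩
  have ht0 : 0 < t := by rw [htdef]; exact div_pos hcpos habs
  have hαt : |α| * t = c := by
    rw [htdef, mul_comm, div_mul_cancel₀ _ (ne_of_gt habs)]
  refine ⟨t, ?_, ?_⟩
  · -- N < t
    have h1 : |α| < 1/(2*(|N|+1)) := lt_of_lt_of_le hαδ hδ2
    have h2 : |α| * (2*(|N|+1)) < 1 := (lt_div_iff₀ (by have := abs_nonneg N; positivity)).mp h1
    rw [htdef, lt_div_iff₀ habs]
    nlinarith [le_abs_self N, abs_nonneg N, abs_nonneg α,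
      mul_le_mul_of_nonneg_right (le_abs_self N) (abs_nonneg α)]
  · rintro ⟨p', q', hq'1, hq't, herr⟩
    have hq'R : (1 : ℝ) ≤ (q' : ℝ) := by exact_mod_cast hq'1
    have herr' : |(q' : ℝ) * x - (p' : ℝ)| < (1 - ε') / t :=
      lt_of_lt_of_le herr (by gcongr)
    by_cases hD : q1 * p' - q' * p1 = 0
    · -- the solution is a multiple of the reduced fraction
      have hdvd : q1 ∣ q' := by
        have h1 : q1 ∣ q' * p1 := ⟨p', by linarith⟩
        exact (Int.isCoprime_iff_gcd_eq_one.mpr hcop).dvd_of_dvd_mul_right h1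
      obtain ⟨k, hk⟩ := hdvd
      have hk1 : 1 ≤ k := by nlinarith
      have hp'eq : p' = k * p1 := by
        have h2 : q1 * p' = q1 * (k * p1) := by
          have h3 : q1 * p' = q' * p1 := by omega
          rw [h3, hk]; ring
        exact mul_left_cancel₀ (by omega : q1 ≠ 0) h2
      have hkR : (1 : ℝ) ≤ (k : ℝ) := by exact_mod_cast hk1
      have hEeq : (q' : ℝ) * x - (p' : ℝ) = (k : ℝ) * α := by
        have h1 : (q' : ℝ) = (q1 : ℝ) * (k : ℝ) := by exact_mod_cast congrArg Int.cast hk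
        have h2 : (p' : ℝ) = (k : ℝ) * (p1 : ℝ) := by exact_mod_cast congrArg Int.cast hp'eq
        rw [h1, h2, hαdef]; ring
      rw [hEeq, abs_mul, abs_of_pos (by linarith : (0:ℝ) < (k:ℝ)), lt_div_iff₀ ht0] at herr'
      nlinarith [mul_nonneg (sub_nonneg.mpr hkR) (le_of_lt (mul_pos habs ht0))]
    · -- nonzero integer determinant
      have h1le : (1 : ℝ) ≤ |(q1 : ℝ) * (p' : ℝ) - (q' : ℝ) * (p1 : ℝ)| := by
        have h0 : (1 : ℤ) ≤ |q1 * p' - q' * p1| := Int.one_le_abs (by omega)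
        calc (1 : ℝ) ≤ ((|q1 * p' - q' * p1| : ℤ) : ℝ) := by exact_mod_cast h0
          _ = |(q1 : ℝ) * (p' : ℝ) - (q' : ℝ) * (p1 : ℝ)| := by push_cast; ring_nf
      obtain ⟨E, hEdef⟩ : ∃ r : ℝ, r = (q' : ℝ) * x - (p' : ℝ) := ⟨_, rfl⟩
      rw [← hEdef] at herr'
      have hident : (q1 : ℝ) * (p' : ℝ) - (q' : ℝ) * (p1 : ℝ)
          = (q' : ℝ) * α - (q1 : ℝ) * E := by
        rw [hαdef, hEdef]; ring
      have htri : |(q' : ℝ) * α - (q1 : ℝ) * E| ≤ (q' : ℝ) * |α| + (q1 : ℝ) * |E| := by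
        calc |(q' : ℝ) * α - (q1 : ℝ) * E| ≤ |(q' : ℝ) * α| + |(q1 : ℝ) * E| :=
              abs_sub _ _
          _ = (q' : ℝ) * |α| + (q1 : ℝ) * |E| := by
              rw [abs_mul, abs_mul, abs_of_pos (by linarith : (0:ℝ) < (q':ℝ)),
                abs_of_pos (by linarith : (0:ℝ) < (q1:ℝ))]
      have hq'α : (q' : ℝ) * |α| < c := by
        calc (q' : ℝ) * |α| < t * |α| := mul_lt_mul_of_pos_right hq't habs
          _ = c := by rw [mul_comm]; exact hαt
      have hkey : (q1 : ℝ) * ((1 - ε') / t) < ε'/2 := by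
        have ht' : (1 - ε') / t = (1 - ε') * |α| / c := by
          rw [htdef, div_div_eq_mul_div]
        rw [ht', mul_div_assoc']
        rw [div_lt_iff₀ hcpos]
        nlinarith [mul_nonneg (le_of_lt hε'pos)
            (mul_nonneg (by linarith : (0:ℝ) ≤ (q1:ℝ)) (abs_nonneg α)),
          mul_nonneg (le_of_lt hε'pos) (by linarith : (0:ℝ) ≤ 1 - ε'), abs_nonneg α]
      have hq1E : (q1 : ℝ) * |E| < ε'/2 := by
        calc (q1 : ℝ) * |E| < (q1 : ℝ) * ((1 - ε') / t) :=
              mul_lt_mul_of_pos_left herr' (by linarith)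
          _ < ε'/2 := hkey
      rw [hident] at h1le
      have hcontra : (1 : ℝ) < 1 := by
        calc (1 : ℝ) ≤ |(q' : ℝ) * α - (q1 : ℝ) * E| := h1le
          _ ≤ (q' : ℝ) * |α| + (q1 : ℝ) * |E| := htri
          _ < c + ε'/2 := by linarith
          _ = 1 := by rw [hcdef]; ring
      linarith
end
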